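/- arXiv:1812.08422 — 4 statements merged into one kernel-verified Lean document; each statement's English description precedes it below -/
import Mathlib

section
/- Let 1 ≤ p < ∞ and let w be a weight in the discrete Muckenhoupt class A_p(ℕ). Then the subsampled weights w_e(n) = w(2n) and w_o(n) = w(2n+1) also belong to A_p(ℕ). -/
open Real MeasureTheory

/-- Jacobi polynomial via Rodrigues' formula. -/
noncomputable def jacobiP (a b : ℝ) (n : ℕ) (z : ℝ) : ℝ :=
  ((-1 : ℝ) ^ n / ((2 : ℝ) ^ n * (Nat.factorial n : ℝ))) * (1 - z) ^ (-a) * (1 + z) ^ (-b) *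
    iteratedDeriv n (fun t : ℝ => (1 - t) ^ (a + (n : ℝ)) * (1 + t) ^ (b + (n : ℝ))) z

/-- Normalization constants. -/
noncomputable def jacobiw (a b : ℝ) (n : ℕ) : ℝ :=
  if n = 0 then Real.sqrt (Real.Gamma (a + b + 2) / (Real.Gamma (a + 1) * Real.Gamma (b + 1)))
  else Real.sqrt ((2 * (n : ℝ) + a + b + 1) * Real.Gamma ((n : ℝ) + 1) *
    Real.Gamma ((n : ℝ) + a + b + 1) / (Real.Gamma ((n : ℝ) + a + 1) * Real.Gamma ((n : ℝ) + b + 1)))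

/-- Normalized Jacobi functions on (0, π). -/
noncomputable def jacobiFn (a b : ℝ) (n : ℕ) (x : ℝ) : ℝ :=
  jacobiw a b n * Real.sin (x / 2) ^ (a + 1 / 2) * Real.cos (x / 2) ^ (b + 1 / 2) *
    jacobiP a b n (Real.cos x)

/-- Transplantation kernel `K_{α,β}^{γ,δ}(n,m)`. -/
noncomputable def jacobiK (α β γ δ : ℝ) (n m : ℕ) : ℝ :=
  ∫ x in (0 : ℝ)..Real.pi, jacobiFn γ δ n x * jacobiFn α β m x

/-- Discrete Muckenhoupt class `A_p(ℕ)`, `1 < p < ∞`. -/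
def IsDiscreteAp (p : ℝ) (w : ℕ → ℝ) : Prop :=
  (∀ n, 0 < w n) ∧
  ∃ A : ℝ, ∀ n m : ℕ, n ≤ m →
    (∑ k ∈ Finset.Icc n m, w k) *
      (∑ k ∈ Finset.Icc n m, w k ^ (-(1 / (p - 1)))) ^ (p - 1) ≤
      A * ((m : ℝ) - (n : ℝ) + 1) ^ p

/-- Discrete Muckenhoupt class `A_1(ℕ)`. -/
def IsDiscreteA1 (w : ℕ → ℝ) : Prop :=
  (∀ n, 0 < w n) ∧
  ∃ A : ℝ, ∀ n m k : ℕ, n ≤ k → k ≤ m →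
    (∑ j ∈ Finset.Icc n m, w j) * (w k)⁻¹ ≤ A * ((m : ℝ) - (n : ℝ) + 1)

/-- Eigenvalues of the Jacobi differential operator. -/
noncomputable def jacobiLam (a b : ℝ) (n : ℕ) : ℝ := ((n : ℝ) + (a + b + 1) / 2) ^ 2

/-- The potential `W_{γ,δ}^{α,β}`. -/
noncomputable def jacobiW (α β γ δ : ℝ) (x : ℝ) : ℝ :=
  (γ ^ 2 - α ^ 2) / (4 * Real.sin (x / 2) ^ 2) + (δ ^ 2 - β ^ 2) / (4 * Real.cos (x / 2) ^ 2)

/-- The bilinear form `U(f,g) = f g' - g f'`. -/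
noncomputable def jacobiU (f g : ℝ → ℝ) (x : ℝ) : ℝ := f x * deriv g x - g x * deriv f x

/-- `S(n,m)`: boundary terms. -/
noncomputable def jacobiS (α β γ δ : ℝ) (n m : ℕ) : ℝ :=
  jacobiU (jacobiFn γ δ n) (jacobiFn α β m) (Real.pi - 1 / ((n : ℝ) + 1)) -
    jacobiU (jacobiFn γ δ n) (jacobiFn α β m) (1 / ((n : ℝ) + 1))

/-- `J(n,m)`. -/
noncomputable def jacobiJ (α β γ δ : ℝ) (n m : ℕ) : ℝ :=
  ∫ x in (1 / ((n : ℝ) + 1))..(Real.pi - 1 / ((n : ℝ) + 1)),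
    jacobiW α β γ δ x * jacobiFn γ δ n x * jacobiFn α β m x

/-- Jacobi coefficients of a function on `(0, π)`. -/
noncomputable def jacobiCoeff (a b : ℝ) (n : ℕ) (F : ℝ → ℝ) : ℝ :=
  ∫ x in (0 : ℝ)..Real.pi, F x * jacobiFn a b n x

/-- Continuous Muckenhoupt class `A_q(0,π)`. -/
def IsContinuousAq (q : ℝ) (v : ℝ → ℝ) : Prop :=
  (∀ x ∈ Set.Ioo 0 Real.pi, 0 < v x) ∧
  ∃ A : ℝ, ∀ r s : ℝ, 0 < r → r ≤ s → s < Real.pi →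
    (∫ x in r..s, v x) * (∫ x in r..s, v x ^ (-(1 / (q - 1)))) ^ (q - 1) ≤ A * (s - r) ^ q

/-- Membership in the weighted space `L^q_v(0,π)`. -/
def MemLqv (q : ℝ) (v : ℝ → ℝ) (F : ℝ → ℝ) : Prop :=
  Measurable F ∧ IntegrableOn (fun x => |F x| ^ q * v x) (Set.Ioo 0 Real.pi)


private lemma sum_sub_le (f : ℕ → ℝ) (hf : ∀ j, 0 ≤ f j) (c n m : ℕ) :
    ∑ k ∈ Finset.Icc n m, f (2 * k + c) ≤ ∑ j ∈ Finset.Icc (2 * n) (2 * m + c), f j := by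
  rw [← Finset.sum_image (g := fun k => 2 * k + c) (f := f)
    (fun a _ b _ h => by simp only [] at h; omega)]
  apply Finset.sum_le_sum_of_subset_of_nonneg
  · intro j hj
    simp only [Finset.mem_image, Finset.mem_Icc] at *
    obtain ⟨k, hk, rfl⟩ := hj; omega
  · intro j _ _; exact hf j

private lemma a1_sub (w : ℕ → ℝ) (hw : IsDiscreteA1 w) (c : ℕ) (hc : c ≤ 1) :
    IsDiscreteA1 (fun n => w (2 * n + c)) := by
  obtain ⟨hpos, A, hA⟩ := hw
  refine ⟨fun n => hpos _, 2 * A, fun n m k hnk hkm => ?_⟩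
  have h1 := sum_sub_le w (fun j => (hpos j).le) c n m
  have h2 := hA (2 * n) (2 * m + c) (2 * k + c) (by omega) (by omega)
  have h3 : (0:ℝ) ≤ (w (2 * k + c))⁻¹ := (inv_nonneg).2 (hpos _).le
  calc (∑ j ∈ Finset.Icc n m, w (2 * j + c)) * (w (2 * k + c))⁻¹
      ≤ (∑ j ∈ Finset.Icc (2 * n) (2 * m + c), w j) * (w (2 * k + c))⁻¹ :=
        mul_le_mul_of_nonneg_right h1 h3
    _ ≤ A * ((2 * m + c : ℕ) - (2 * n : ℕ) + 1 : ℝ) := h2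
    _ ≤ 2 * A * ((m : ℝ) - n + 1) := by
        have hmn : (n : ℝ) ≤ m := Nat.cast_le.2 (hnk.trans hkm)
        have hA0 : 0 ≤ A := by
          have := hA 0 0 0 le_rfl le_rfl
          have h0 : 0 < w 0 * (w 0)⁻¹ := mul_pos (hpos 0) (inv_pos.2 (hpos 0))
          simp only [Finset.Icc_self, Finset.sum_singleton, Nat.cast_zero] at this
          nlinarith
        have hc1 : (c : ℝ) ≤ 1 := by exact_mod_cast hc
        push_cast
        nlinarith

private lemma ap_sub (p : ℝ) (hp : 1 < p) (w : ℕ → ℝ) (hw : IsDiscreteAp p w)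
    (c : ℕ) (hc : c ≤ 1) : IsDiscreteAp p (fun n => w (2 * n + c)) := by
  obtain ⟨hpos, A, hA⟩ := hw
  refine ⟨fun n => hpos _, A * 2 ^ p, fun n m hnm => ?_⟩
  set e := -(1 / (p - 1)) with he
  have hf1 : ∀ j, 0 ≤ w j := fun j => (hpos j).le
  have hf2 : ∀ j, 0 ≤ w j ^ e := fun j => Real.rpow_nonneg (hf1 j) e
  have h1 := sum_sub_le w hf1 c n m
  have h2 := sum_sub_le (fun j => w j ^ e) hf2 c n m
  have hbig := hA (2 * n) (2 * m + c) (by omega)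
  have hs1 : (0:ℝ) ≤ ∑ k ∈ Finset.Icc n m, w (2 * k + c) ^ e :=
    Finset.sum_nonneg fun j _ => hf2 _
  have hs2 : (0:ℝ) ≤ ∑ j ∈ Finset.Icc (2 * n) (2 * m + c), w j :=
    Finset.sum_nonneg fun j _ => hf1 _
  have hmn : (n : ℝ) ≤ m := Nat.cast_le.2 hnm
  have hc1 : (c : ℝ) ≤ 1 := by exact_mod_cast hc
  calc (∑ k ∈ Finset.Icc n m, w (2 * k + c)) *
        (∑ k ∈ Finset.Icc n m, w (2 * k + c) ^ e) ^ (p - 1)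
      ≤ (∑ j ∈ Finset.Icc (2 * n) (2 * m + c), w j) *
        (∑ j ∈ Finset.Icc (2 * n) (2 * m + c), w j ^ e) ^ (p - 1) := by
        apply mul_le_mul h1 (Real.rpow_le_rpow hs1 h2 (by linarith))
          (Real.rpow_nonneg hs1 _) hs2
    _ ≤ A * ((2 * m + c : ℕ) - (2 * n : ℕ) + 1 : ℝ) ^ p := hbig
    _ ≤ A * 2 ^ p * ((m : ℝ) - n + 1) ^ p := by
        have hA0 : 0 ≤ A := by
          have h00 := hA 0 0 le_rfl
          simp only [Finset.Icc_self, Finset.sum_singleton, Nat.cast_zero] at h00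
          have h1' : (0:ℝ) < w 0 * (w 0 ^ e) ^ (p - 1) :=
            mul_pos (hpos 0) (Real.rpow_pos_of_pos (Real.rpow_pos_of_pos (hpos 0) e) _)
          have : ((0:ℝ) - 0 + 1) ^ p = 1 := by norm_num
          nlinarith [h00, this]
        have hkey : ((2 * m + c : ℕ) - (2 * n : ℕ) + 1 : ℝ) ^ p ≤
            (2 * ((m : ℝ) - n + 1)) ^ p := by
          apply Real.rpow_le_rpow (by push_cast; linarith) (by push_cast; linarith)
            (by linarith)
        have h2p : (2 * ((m : ℝ) - n + 1)) ^ p = 2 ^ p * ((m : ℝ) - n + 1) ^ p :=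
          Real.mul_rpow (by norm_num) (by linarith)
        calc A * ((2 * m + c : ℕ) - (2 * n : ℕ) + 1 : ℝ) ^ p
            ≤ A * (2 * ((m : ℝ) - n + 1)) ^ p := mul_le_mul_of_nonneg_left hkey hA0
          _ = A * 2 ^ p * ((m : ℝ) - n + 1) ^ p := by rw [h2p]; ring

/-- Even and odd subsampled weights of a discrete `A_p` weight are again `A_p` weights. -/
theorem discrete_Ap_subsampled (p : ℝ) (hp : 1 ≤ p) (w : ℕ → ℝ)
    (hw : (p = 1 ∧ IsDiscreteA1 w) ∨ (1 < p ∧ IsDiscreteAp p w)) :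
    ((p = 1 ∧ IsDiscreteA1 (fun n => w (2 * n))) ∨
        (1 < p ∧ IsDiscreteAp p (fun n => w (2 * n)))) ∧
      ((p = 1 ∧ IsDiscreteA1 (fun n => w (2 * n + 1))) ∨
        (1 < p ∧ IsDiscreteAp p (fun n => w (2 * n + 1)))) := by
  constructor
  · rcases hw with ⟨hp1, h1⟩ | ⟨hp1, h1⟩
    · exact Or.inl ⟨hp1, by simpa using a1_sub w h1 0 (by norm_num)⟩
    · exact Or.inr ⟨hp1, by simpa using ap_sub p hp1 w h1 0 (by norm_num)⟩
  · rcases hw with ⟨hp1, h1⟩ | ⟨hp1, h1⟩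
    · exact Or.inl ⟨hp1, a1_sub w h1 1 le_rfl⟩
    · exact Or.inr ⟨hp1, ap_sub p hp1 w h1 1 le_rfl⟩
end

section
/- Let α, β, γ, δ ≥ −1/2 and let n, m ∈ ℕ be such that λ_n^{(γ,δ)} ≠ λ_m^{(α,β)}, where λ_k^{(a,b)} = (k + (a+b+1)/2)². Then ∫_{1/(n+1)}^{π−1/(n+1)} p_n^{(γ,δ)}(x) p_m^{(α,β)}(x) dx = (S(n,m) + J(n,m)) / (λ_n^{(γ,δ)} − λ_m^{(α,β)}). -/
open Real MeasureTheory

section JacobiAuxProofs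
open Real Set

noncomputable def rfn (a b : ℝ) (n : ℕ) : ℝ → ℝ :=
  fun t : ℝ => (1 - t) ^ (a + (n : ℝ)) * (1 + t) ^ (b + (n : ℝ))

lemma rfn_contDiffOn (a b : ℝ) (n : ℕ) :
    ContDiffOn ℝ ⊤ (rfn a b n) (Ioo (-1 : ℝ) 1) := by
  apply ContDiffOn.mul
  · exact (contDiffOn_const.sub contDiffOn_id).rpow_const_of_ne
      (fun x hx => by simp only [id]; nlinarith [hx.2])
  · exact (contDiffOn_const.add contDiffOn_id).rpow_const_of_ne
      (fun x hx => by simp only [id]; nlinarith [hx.1])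

lemma hasDerivAt_iteratedDeriv_of_isOpen {f : ℝ → ℝ} {s : Set ℝ} (hs : IsOpen s)
    (hf : ContDiffOn ℝ ⊤ f s) (k : ℕ) {z : ℝ} (hz : z ∈ s) :
    HasDerivAt (iteratedDeriv k f) (iteratedDeriv (k + 1) f z) z := by
  have heq : Set.EqOn (iteratedDerivWithin k f s) (iteratedDeriv k f) s := by
    intro x hx
    rw [iteratedDerivWithin, iteratedDeriv, iteratedFDerivWithin_of_isOpen k hs hx]
  have h1 : DifferentiableWithinAt ℝ (iteratedDerivWithin k f s) s z := by
    refine (hf.differentiableOn_iteratedDerivWithin ?_ hs.uniqueDiffOn) z hz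
    exact (WithTop.coe_lt_top _ : ((k : ℕ∞) : WithTop ℕ∞) < ⊤)
  have h2 : DifferentiableAt ℝ (iteratedDeriv k f) z :=
    ((h1.congr (fun x hx => (heq hx).symm) (heq hz).symm).differentiableAt (hs.mem_nhds hz))
  rw [iteratedDeriv_succ]
  exact h2.hasDerivAt

lemma rfn_base (a b : ℝ) (n : ℕ) :
    ∀ z ∈ Ioo (-1:ℝ) 1, (1 - z^2) * iteratedDeriv 1 (rfn a b n) z =
      ((b - a) + (-(a + b + 2*(n:ℝ))) * z) * iteratedDeriv 0 (rfn a b n) z := by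
  intro z hz
  have hs : (0:ℝ) < 1 - z := by nlinarith [hz.2]
  have hc : (0:ℝ) < 1 + z := by nlinarith [hz.1]
  have h1 : HasDerivAt (fun t : ℝ => (1 - t) ^ (a + (n:ℝ)))
      (-(a + (n:ℝ)) * (1 - z) ^ (a + (n:ℝ) - 1)) z := by
    have := (((hasDerivAt_id z).const_sub 1).rpow_const
      (p := a + (n:ℝ)) (Or.inl hs.ne'))
    refine this.congr_deriv ?_
    simp only [id]; ring
  have h2 : HasDerivAt (fun t : ℝ => (1 + t) ^ (b + (n:ℝ)))
      ((b + (n:ℝ)) * (1 + z) ^ (b + (n:ℝ) - 1)) z := by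
    have := (((hasDerivAt_id z).const_add 1).rpow_const
      (p := b + (n:ℝ)) (Or.inl hc.ne'))
    refine this.congr_deriv ?_
    simp only [id]; ring
  have hd : HasDerivAt (rfn a b n)
      (-(a + (n:ℝ)) * (1 - z) ^ (a + (n:ℝ) - 1) * (1 + z) ^ (b + (n:ℝ))
        + (1 - z) ^ (a + (n:ℝ)) * ((b + (n:ℝ)) * (1 + z) ^ (b + (n:ℝ) - 1))) z :=
    h1.mul h2
  have e1 : (1 - z) ^ (a + (n:ℝ) - 1) * (1 - z) = (1 - z) ^ (a + (n:ℝ)) := by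
    rw [← Real.rpow_add_one hs.ne']; ring_nf
  have e2 : (1 + z) ^ (b + (n:ℝ) - 1) * (1 + z) = (1 + z) ^ (b + (n:ℝ)) := by
    rw [← Real.rpow_add_one hc.ne']; ring_nf
  rw [iteratedDeriv_one, hd.deriv, iteratedDeriv_zero]
  show _ = _ * ((1 - z) ^ (a + (n:ℝ)) * (1 + z) ^ (b + (n:ℝ)))
  rw [← e1, ← e2]; ring

lemma rec_step (a b : ℝ) (n k j : ℕ) (P Q R : ℝ)
    (hE : ∀ z ∈ Ioo (-1:ℝ) 1, (1 - z^2) * iteratedDeriv (k+1) (rfn a b n) z =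
      (P + Q * z) * iteratedDeriv k (rfn a b n) z + R * iteratedDeriv j (rfn a b n) z) :
    ∀ z ∈ Ioo (-1:ℝ) 1, (1 - z^2) * iteratedDeriv (k+2) (rfn a b n) z =
      (P + (Q + 2) * z) * iteratedDeriv (k+1) (rfn a b n) z
        + Q * iteratedDeriv k (rfn a b n) z + R * iteratedDeriv (j+1) (rfn a b n) z := by
  intro z hz
  have hgk1 := hasDerivAt_iteratedDeriv_of_isOpen isOpen_Ioo (rfn_contDiffOn a b n) (k+1) hz
  have hgk := hasDerivAt_iteratedDeriv_of_isOpen isOpen_Ioo (rfn_contDiffOn a b n) k hz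
  have hgj := hasDerivAt_iteratedDeriv_of_isOpen isOpen_Ioo (rfn_contDiffOn a b n) j hz
  have hq : HasDerivAt (fun z : ℝ => 1 - z^2) (-(2*z)) z := by
    simpa using ((hasDerivAt_pow 2 z).const_sub 1)
  have hL : HasDerivAt (fun z : ℝ => (1 - z^2) * iteratedDeriv (k+1) (rfn a b n) z) _ z := hq.mul hgk1
  have hlin : HasDerivAt (fun z : ℝ => P + Q*z) Q z := by
    simpa using ((hasDerivAt_id z).const_mul Q).const_add P
  have hR : HasDerivAt (fun z : ℝ => (P + Q*z) * iteratedDeriv k (rfn a b n) z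
      + R * iteratedDeriv j (rfn a b n) z) _ z := (hlin.mul hgk).add (hgj.const_mul R)
  have hEE : deriv (fun z => (1 - z^2) * iteratedDeriv (k+1) (rfn a b n) z) z
      = deriv (fun z => (P + Q*z) * iteratedDeriv k (rfn a b n) z
          + R * iteratedDeriv j (rfn a b n) z) z := by
    apply Filter.EventuallyEq.deriv_eq
    filter_upwards [isOpen_Ioo.mem_nhds hz] with y hy using hE y hy
  rw [hL.deriv, hR.deriv] at hEE
  linear_combination hEE

lemma rfn_ode (a b : ℝ) (n : ℕ) :
    ∀ z ∈ Ioo (-1:ℝ) 1, (1 - z^2) * iteratedDeriv (n+1+1) (rfn a b n) z =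
      ((b - a) + (2 - a - b) * z) * iteratedDeriv (n+1) (rfn a b n) z
        - ((n:ℝ)+1) * ((n:ℝ) + a + b) * iteratedDeriv n (rfn a b n) z := by
  have E : ∀ k : ℕ, ∀ z ∈ Ioo (-1:ℝ) 1,
      (1 - z^2) * iteratedDeriv (k+1) (rfn a b n) z =
        ((b - a) + (2*(k:ℝ) - (a + b + 2*(n:ℝ))) * z) * iteratedDeriv k (rfn a b n) z
          + ((k:ℝ) * ((k:ℝ) - 1) - (k:ℝ) * (a + b + 2*(n:ℝ))) *
              iteratedDeriv (k - 1) (rfn a b n) z := by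
    intro k
    induction k with
    | zero =>
      intro z hz
      have h := rfn_base a b n z hz
      push_cast at h ⊢
      linear_combination h
    | succ k ih =>
      intro z hz
      rcases Nat.eq_zero_or_pos k with rfl | hk
      · have h := rec_step a b n 0 0 (b - a) (-(a + b + 2*(n:ℝ))) 0
          (by intro z hz; have := rfn_base a b n z hz; linear_combination this) z hz
        push_cast at h ⊢
        linear_combination h
      · have h := rec_step a b n k (k-1) (b - a) (2*(k:ℝ) - (a + b + 2*(n:ℝ)))
          ((k:ℝ) * ((k:ℝ) - 1) - (k:ℝ) * (a + b + 2*(n:ℝ))) ih z hz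
        rw [Nat.sub_add_cancel hk] at h
        simp only [Nat.add_sub_cancel]
        push_cast at h ⊢
        linear_combination h
  intro z hz
  have h := E (n+1) z hz
  simp only [Nat.add_sub_cancel] at h
  push_cast at h ⊢
  linear_combination h

noncomputable def Kc (a b : ℝ) (n : ℕ) : ℝ :=
  jacobiw a b n * ((-1 : ℝ) ^ n / ((2 : ℝ) ^ n * (Nat.factorial n : ℝ)))
    * (2:ℝ) ^ (-a) * (2:ℝ) ^ (-b)

noncomputable def Pfn (a b : ℝ) (n : ℕ) (x : ℝ) : ℝ :=
  Kc a b n * Real.sin (x/2) ^ (1/2 - a) * Real.cos (x/2) ^ (1/2 - b)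
    * iteratedDeriv n (rfn a b n) (Real.cos x)

noncomputable def Dfn (a b : ℝ) (n : ℕ) (x : ℝ) : ℝ :=
  Kc a b n * ((1/2 - a) / 2 * (Real.cos (x/2) * Real.sin (x/2) ^ (1/2 - a - 1) * Real.cos (x/2) ^ (1/2 - b))
    - (1/2 - b) / 2 * (Real.sin (x/2) * Real.sin (x/2) ^ (1/2 - a) * Real.cos (x/2) ^ (1/2 - b - 1)))
    * iteratedDeriv n (rfn a b n) (Real.cos x)
  - Kc a b n * Real.sin (x/2) ^ (1/2 - a) * Real.cos (x/2) ^ (1/2 - b) * Real.sin x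
    * iteratedDeriv (n+1) (rfn a b n) (Real.cos x)

noncomputable def Vfn (a b : ℝ) (x : ℝ) : ℝ :=
  (a^2 - 1/4) / (4 * Real.sin (x/2)^2) + (b^2 - 1/4) / (4 * Real.cos (x/2)^2)

lemma mem_Ioo_half {x : ℝ} (hx : x ∈ Ioo 0 π) :
    0 < Real.sin (x/2) ∧ 0 < Real.cos (x/2) ∧ Real.cos x ∈ Ioo (-1:ℝ) 1 := by
  obtain ⟨h0, h1⟩ := hx
  have hpi := Real.pi_pos
  refine ⟨Real.sin_pos_of_pos_of_lt_pi (by linarith) (by linarith),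
    Real.cos_pos_of_mem_Ioo ⟨by linarith, by linarith⟩, ?_, ?_⟩
  · have := Real.strictAntiOn_cos ⟨le_of_lt h0, le_of_lt h1⟩ ⟨le_of_lt hpi, le_refl _⟩ h1
    simpa [Real.cos_pi] using this
  · have := Real.strictAntiOn_cos ⟨le_refl _, le_of_lt hpi⟩ ⟨le_of_lt h0, le_of_lt h1⟩ h0
    simpa [Real.cos_zero] using this

lemma jacobiFn_eq_Pfn (a b : ℝ) (n : ℕ) : ∀ x ∈ Ioo 0 π, jacobiFn a b n x = Pfn a b n x := by
  intro x hx
  obtain ⟨hs, hc, hcc⟩ := mem_Ioo_half hx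
  have hsc := Real.sin_sq_add_cos_sq (x/2)
  have hcos := Real.cos_two_mul (x/2)
  rw [show 2*(x/2) = x by ring] at hcos
  have h1m : 1 - Real.cos x = 2 * Real.sin (x/2)^2 := by
    rw [hcos]; linear_combination (-2 : ℝ) * hsc
  have h1p : 1 + Real.cos x = 2 * Real.cos (x/2)^2 := by
    rw [hcos]; ring
  have ea : (2 * Real.sin (x/2)^2 : ℝ) ^ (-a) = (2:ℝ)^(-a) * Real.sin (x/2) ^ ((2:ℝ) * -a) := by
    rw [Real.mul_rpow (by norm_num) (by positivity)]
    congr 1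
    rw [← Real.rpow_natCast (Real.sin (x/2)) 2, ← Real.rpow_mul hs.le]
    norm_num
  have eb : (2 * Real.cos (x/2)^2 : ℝ) ^ (-b) = (2:ℝ)^(-b) * Real.cos (x/2) ^ ((2:ℝ) * -b) := by
    rw [Real.mul_rpow (by norm_num) (by positivity)]
    congr 1
    rw [← Real.rpow_natCast (Real.cos (x/2)) 2, ← Real.rpow_mul hc.le]
    norm_num
  have es : Real.sin (x/2) ^ (1/2 - a : ℝ)
      = Real.sin (x/2) ^ (a + 1/2) * Real.sin (x/2) ^ ((2:ℝ) * -a) := by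
    rw [← Real.rpow_add hs]; congr 1; ring
  have ec : Real.cos (x/2) ^ (1/2 - b : ℝ)
      = Real.cos (x/2) ^ (b + 1/2) * Real.cos (x/2) ^ ((2:ℝ) * -b) := by
    rw [← Real.rpow_add hc]; congr 1; ring
  simp only [jacobiFn, jacobiP, Pfn, Kc]
  unfold rfn
  rw [h1m, h1p, ea, eb, es, ec]
  ring

lemma hasDerivAt_Pfn (a b : ℝ) (n : ℕ) :
    ∀ x ∈ Ioo 0 π, HasDerivAt (Pfn a b n) (Dfn a b n x) x := by
  intro x hx
  obtain ⟨hs, hc, hcc⟩ := mem_Ioo_half hx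
  have hhalf : HasDerivAt (fun y : ℝ => y/2) (1/2 : ℝ) x := by
    simpa using (hasDerivAt_id x).div_const 2
  have hS : HasDerivAt (fun y : ℝ => Real.sin (y/2)) (Real.cos (x/2) * (1/2)) x :=
    (Real.hasDerivAt_sin (x/2)).comp (h₂ := Real.sin) x hhalf
  have hSp : HasDerivAt (fun y : ℝ => Real.sin (y/2) ^ (1/2 - a : ℝ))
      (Real.cos (x/2) * (1/2) * (1/2 - a) * Real.sin (x/2) ^ (1/2 - a - 1)) x :=
    hS.rpow_const (Or.inl hs.ne')
  have hC : HasDerivAt (fun y : ℝ => Real.cos (y/2)) (-Real.sin (x/2) * (1/2)) x :=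
    (Real.hasDerivAt_cos (x/2)).comp (h₂ := Real.cos) x hhalf
  have hCp : HasDerivAt (fun y : ℝ => Real.cos (y/2) ^ (1/2 - b : ℝ))
      (-Real.sin (x/2) * (1/2) * (1/2 - b) * Real.cos (x/2) ^ (1/2 - b - 1)) x :=
    hC.rpow_const (Or.inl hc.ne')
  have hG : HasDerivAt (fun y : ℝ => iteratedDeriv n (rfn a b n) (Real.cos y))
      (iteratedDeriv (n+1) (rfn a b n) (Real.cos x) * -Real.sin x) x :=
    (hasDerivAt_iteratedDeriv_of_isOpen isOpen_Ioo (rfn_contDiffOn a b n) n hcc).comp x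
      (Real.hasDerivAt_cos x)
  have H := ((hSp.const_mul (Kc a b n)).mul hCp).mul hG
  unfold Pfn Dfn
  refine H.congr_deriv (Eq.symm ?_)
  simp only [Pi.mul_apply]
  ring

lemma hasDerivAt_Dfn (a b : ℝ) (n : ℕ) :
    ∀ x ∈ Ioo 0 π, HasDerivAt (Dfn a b n)
      ((Vfn a b x - jacobiLam a b n) * Pfn a b n x) x := by
  intro x hx
  obtain ⟨hs, hc, hcc⟩ := mem_Ioo_half hx
  have hhalf : HasDerivAt (fun y : ℝ => y/2) (1/2 : ℝ) x := by
    simpa using (hasDerivAt_id x).div_const 2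
  have hS : HasDerivAt (fun y : ℝ => Real.sin (y/2)) (Real.cos (x/2) * (1/2)) x :=
    (Real.hasDerivAt_sin (x/2)).comp (h₂ := Real.sin) x hhalf
  have hC : HasDerivAt (fun y : ℝ => Real.cos (y/2)) (-Real.sin (x/2) * (1/2)) x :=
    (Real.hasDerivAt_cos (x/2)).comp (h₂ := Real.cos) x hhalf
  have hSp : HasDerivAt (fun y : ℝ => Real.sin (y/2) ^ (1/2 - a : ℝ))
      (Real.cos (x/2) * (1/2) * (1/2 - a) * Real.sin (x/2) ^ (1/2 - a - 1)) x :=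
    hS.rpow_const (Or.inl hs.ne')
  have hSp1 : HasDerivAt (fun y : ℝ => Real.sin (y/2) ^ (1/2 - a - 1 : ℝ))
      (Real.cos (x/2) * (1/2) * (1/2 - a - 1) * Real.sin (x/2) ^ (1/2 - a - 1 - 1)) x :=
    hS.rpow_const (Or.inl hs.ne')
  have hCp : HasDerivAt (fun y : ℝ => Real.cos (y/2) ^ (1/2 - b : ℝ))
      (-Real.sin (x/2) * (1/2) * (1/2 - b) * Real.cos (x/2) ^ (1/2 - b - 1)) x :=
    hC.rpow_const (Or.inl hc.ne')
  have hCp1 : HasDerivAt (fun y : ℝ => Real.cos (y/2) ^ (1/2 - b - 1 : ℝ))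
      (-Real.sin (x/2) * (1/2) * (1/2 - b - 1) * Real.cos (x/2) ^ (1/2 - b - 1 - 1)) x :=
    hC.rpow_const (Or.inl hc.ne')
  have hG : HasDerivAt (fun y : ℝ => iteratedDeriv n (rfn a b n) (Real.cos y))
      (iteratedDeriv (n+1) (rfn a b n) (Real.cos x) * -Real.sin x) x :=
    (hasDerivAt_iteratedDeriv_of_isOpen isOpen_Ioo (rfn_contDiffOn a b n) n hcc).comp x
      (Real.hasDerivAt_cos x)
  have hG1 : HasDerivAt (fun y : ℝ => iteratedDeriv (n+1) (rfn a b n) (Real.cos y))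
      (iteratedDeriv (n+1+1) (rfn a b n) (Real.cos x) * -Real.sin x) x :=
    (hasDerivAt_iteratedDeriv_of_isOpen isOpen_Ioo (rfn_contDiffOn a b n) (n+1) hcc).comp x
      (Real.hasDerivAt_cos x)
  have hT1 := ((((((hC.mul hSp1).mul hCp).const_mul ((1/2 - a)/2)).sub
      (((hS.mul hSp).mul hCp1).const_mul ((1/2 - b)/2))).const_mul (Kc a b n)).mul hG)
  have hT2 := ((((hSp.const_mul (Kc a b n)).mul hCp).mul (Real.hasDerivAt_sin x)).mul hG1)
  have HH := hT1.sub hT2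
  have hODE := rfn_ode a b n (Real.cos x) hcc
  have hsc := Real.sin_sq_add_cos_sq (x/2)
  have hcos : Real.cos x = 2 * Real.cos (x/2)^2 - 1 := by
    have h := Real.cos_two_mul (x/2); rw [show 2*(x/2) = x by ring] at h; exact h
  have hsin : Real.sin x = 2 * Real.sin (x/2) * Real.cos (x/2) := by
    have h := Real.sin_two_mul (x/2); rw [show 2*(x/2) = x by ring] at h; exact h
  have ES2 : Real.sin (x/2) ^ (1/2 - a - 1 - 1 : ℝ) * Real.sin (x/2)
      = Real.sin (x/2) ^ (1/2 - a - 1 : ℝ) := by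
    rw [← Real.rpow_add_one hs.ne']; ring_nf
  have ES1 : Real.sin (x/2) ^ (1/2 - a - 1 : ℝ) * Real.sin (x/2)
      = Real.sin (x/2) ^ (1/2 - a : ℝ) := by
    rw [← Real.rpow_add_one hs.ne']; ring_nf
  have EC2 : Real.cos (x/2) ^ (1/2 - b - 1 - 1 : ℝ) * Real.cos (x/2)
      = Real.cos (x/2) ^ (1/2 - b - 1 : ℝ) := by
    rw [← Real.rpow_add_one hc.ne']; ring_nf
  have EC1 : Real.cos (x/2) ^ (1/2 - b - 1 : ℝ) * Real.cos (x/2)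
      = Real.cos (x/2) ^ (1/2 - b : ℝ) := by
    rw [← Real.rpow_add_one hc.ne']; ring_nf
  unfold Dfn
  refine HH.congr_deriv (Eq.symm ?_)
  simp only [Pi.mul_apply, Pi.sub_apply]
  unfold Pfn Vfn jacobiLam
  set g0 := iteratedDeriv n (rfn a b n) (Real.cos x) with hg0def
  set g1 := iteratedDeriv (n+1) (rfn a b n) (Real.cos x) with hg1def
  set g2 := iteratedDeriv (n+1+1) (rfn a b n) (Real.cos x) with hg2def
  rw [← ES1, ← ES2, ← EC1, ← EC2]
  rw [hsin, hcos]
  rw [hcos] at hODE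
  set S := Real.sin (x/2)
  set C := Real.cos (x/2)
  set Z := Real.sin (x/2) ^ (1/2 - a - 1 - 1 : ℝ) with hZdef
  set W := Real.cos (x/2) ^ (1/2 - b - 1 - 1 : ℝ) with hWdef
  set K := Kc a b n
  field_simp
  have hS2 : S^2 = 1 - C^2 := by linear_combination hsc
  rw [hS2]
  linear_combination (-256 * (1 - C^2) * C^2 * K * Z * W) * hODE


lemma hasDerivAt_jacobiFn (a b : ℝ) (n : ℕ) :
    ∀ x ∈ Set.Ioo 0 π, HasDerivAt (jacobiFn a b n) (Dfn a b n x) x := by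
  intro x hx
  apply (hasDerivAt_Pfn a b n x hx).congr_of_eventuallyEq
  filter_upwards [isOpen_Ioo.mem_nhds hx] with y hy using (jacobiFn_eq_Pfn a b n y hy)

lemma hasDerivAt_Dfn' (a b : ℝ) (n : ℕ) :
    ∀ x ∈ Set.Ioo 0 π, HasDerivAt (Dfn a b n)
      ((Vfn a b x - jacobiLam a b n) * jacobiFn a b n x) x := by
  intro x hx
  rw [jacobiFn_eq_Pfn a b n x hx]
  exact hasDerivAt_Dfn a b n x hx

lemma jacobiW_eq (α β γ δ : ℝ) :
    ∀ x ∈ Ioo 0 π, jacobiW α β γ δ x = Vfn γ δ x - Vfn α β x := by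
  intro x hx
  obtain ⟨hs, hc, -⟩ := mem_Ioo_half hx
  unfold jacobiW Vfn
  field_simp
  ring


end JacobiAuxProofs

/-- Representation of the truncated kernel integral via boundary and potential terms. -/
theorem jacobiK_middle_representation (α β γ δ : ℝ)
    (hα : -(1 / 2) ≤ α) (hβ : -(1 / 2) ≤ β) (hγ : -(1 / 2) ≤ γ) (hδ : -(1 / 2) ≤ δ)
    (n m : ℕ) (hlam : jacobiLam γ δ n ≠ jacobiLam α β m) :
    ∫ x in (1 / ((n : ℝ) + 1))..(Real.pi - 1 / ((n : ℝ) + 1)),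
        jacobiFn γ δ n x * jacobiFn α β m x =
      (jacobiS α β γ δ n m + jacobiJ α β γ δ n m) /
        (jacobiLam γ δ n - jacobiLam α β m) := by
  set r : ℝ := 1 / ((n : ℝ) + 1) with hrdef
  set R : ℝ := Real.pi - 1 / ((n : ℝ) + 1) with hRdef
  have hpi := Real.pi_gt_three
  have hr0 : 0 < r := by positivity
  have hr1 : r ≤ 1 := by
    rw [hrdef, div_le_one (by positivity)]
    linarith [Nat.cast_nonneg (α := ℝ) n]
  have hrR : r ≤ R := by rw [hRdef]; linarith
  have hsub : Set.Icc r R ⊆ Set.Ioo 0 π := by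
    intro x hx
    exact ⟨lt_of_lt_of_le hr0 hx.1, lt_of_le_of_lt hx.2 (by rw [hRdef]; linarith)⟩
  -- derivative of the Wronskian-type function
  have hU : ∀ x ∈ Set.Ioo 0 π,
      HasDerivAt (fun y => jacobiFn γ δ n y * Dfn α β m y - jacobiFn α β m y * Dfn γ δ n y)
        ((jacobiLam γ δ n - jacobiLam α β m) * (jacobiFn γ δ n x * jacobiFn α β m x)
          - jacobiW α β γ δ x * jacobiFn γ δ n x * jacobiFn α β m x) x := by
    intro x hx
    have hF := hasDerivAt_jacobiFn γ δ n x hx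
    have hG := hasDerivAt_jacobiFn α β m x hx
    have hDF := hasDerivAt_Dfn' γ δ n x hx
    have hDG := hasDerivAt_Dfn' α β m x hx
    have H := (hF.mul hDG).sub (hG.mul hDF)
    refine H.congr_deriv (Eq.symm ?_)
    rw [jacobiW_eq α β γ δ x hx]
    ring
  -- continuity facts
  have hFcont : ∀ (a b : ℝ) (k : ℕ), ContinuousOn (jacobiFn a b k) (Set.Icc r R) :=
    fun a b k x hx => ((hasDerivAt_jacobiFn a b k x (hsub hx)).continuousAt).continuousWithinAt
  have hWcont : ContinuousOn (jacobiW α β γ δ) (Set.Icc r R) := by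
    apply ContinuousOn.add <;> apply ContinuousOn.div continuousOn_const
    · exact (continuous_const.mul ((Real.continuous_sin.comp
        (continuous_id.div_const 2)).pow 2)).continuousOn
    · intro x hx
      obtain ⟨hs, -, -⟩ := mem_Ioo_half (hsub hx)
      positivity
    · exact (continuous_const.mul ((Real.continuous_cos.comp
        (continuous_id.div_const 2)).pow 2)).continuousOn
    · intro x hx
      obtain ⟨-, hc, -⟩ := mem_Ioo_half (hsub hx)
      positivity
  have hInt1 : IntervalIntegrable (fun x => jacobiFn γ δ n x * jacobiFn α β m x) volume r R := by
    apply ContinuousOn.intervalIntegrable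
    rw [Set.uIcc_of_le hrR]
    exact (hFcont γ δ n).mul (hFcont α β m)
  have hInt2 : IntervalIntegrable
      (fun x => jacobiW α β γ δ x * jacobiFn γ δ n x * jacobiFn α β m x) volume r R := by
    apply ContinuousOn.intervalIntegrable
    rw [Set.uIcc_of_le hrR]
    exact (hWcont.mul (hFcont γ δ n)).mul (hFcont α β m)
  have hFTC : ∫ x in r..R,
      ((jacobiLam γ δ n - jacobiLam α β m) * (jacobiFn γ δ n x * jacobiFn α β m x)
        - jacobiW α β γ δ x * jacobiFn γ δ n x * jacobiFn α β m x)
      = (jacobiFn γ δ n R * Dfn α β m R - jacobiFn α β m R * Dfn γ δ n R)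
        - (jacobiFn γ δ n r * Dfn α β m r - jacobiFn α β m r * Dfn γ δ n r) := by
    apply intervalIntegral.integral_eq_sub_of_hasDerivAt
      (f := fun y => jacobiFn γ δ n y * Dfn α β m y - jacobiFn α β m y * Dfn γ δ n y)
    · intro x hx
      rw [Set.uIcc_of_le hrR] at hx
      exact hU x (hsub hx)
    · exact (hInt1.const_mul _).sub hInt2
  rw [intervalIntegral.integral_sub (hInt1.const_mul _) hInt2,
    intervalIntegral.integral_const_mul] at hFTC
  have hrmem : r ∈ Set.Ioo 0 π := hsub ⟨le_refl r, hrR⟩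
  have hRmem : R ∈ Set.Ioo 0 π := hsub ⟨hrR, le_refl R⟩
  have hS : jacobiS α β γ δ n m
      = (jacobiFn γ δ n R * Dfn α β m R - jacobiFn α β m R * Dfn γ δ n R)
        - (jacobiFn γ δ n r * Dfn α β m r - jacobiFn α β m r * Dfn γ δ n r) := by
    unfold jacobiS jacobiU
    rw [(hasDerivAt_jacobiFn γ δ n r hrmem).deriv, (hasDerivAt_jacobiFn α β m r hrmem).deriv,
      (hasDerivAt_jacobiFn γ δ n R hRmem).deriv, (hasDerivAt_jacobiFn α β m R hRmem).deriv]
  rw [eq_div_iff (sub_ne_zero.mpr hlam)]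
  have hJ : jacobiJ α β γ δ n m
      = ∫ x in r..R, jacobiW α β γ δ x * jacobiFn γ δ n x * jacobiFn α β m x := rfl
  rw [hS, hJ]
  linarith [hFTC]
end

section
/- Let a, b > −1. Then there exists a constant C such that for every n ∈ ℕ, |w_{n+2}^{(a,b)} / w_n^{(a,b)} − 1| ≤ C / (n+1). -/
open Real MeasureTheory

noncomputable def jwAdef (a b x : ℝ) : ℝ :=
  (2 * x + a + b + 1) * Real.Gamma (x + 1) *
    Real.Gamma (x + a + b + 1) / (Real.Gamma (x + a + 1) * Real.Gamma (x + b + 1))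

noncomputable def jwPN (a b t : ℝ) : ℝ :=
  (2 + (a + b + 3) * t) * (1 + t) * (1 + (a + b) * t) * (1 + (a + b + 1) * t)

noncomputable def jwPD (a b t : ℝ) : ℝ :=
  (2 + (a + b - 1) * t) * (1 + a * t) * (1 + (a + 1) * t) * (1 + b * t) * (1 + (b + 1) * t)

noncomputable def jwQ (a b t : ℝ) : ℝ :=
  4 + (8 + 8*b + 8*a - 4*a*b) * t
    + (4 + 12*b + 4*b^2 + 12*a + 6*a*b - 6*a*b^2 + 4*a^2 - 6*a^2*b) * t^2
    + (4*b + 4*b^2 + 4*a + 8*a*b - 2*a*b^2 - 2*a*b^3 + 4*a^2 - 2*a^2*b - 6*a^2*b^2 - 2*a^3*b) * t^3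
    + (a*b - a*b^3 - a^2*b^2 - a^2*b^3 - a^3*b - a^3*b^2) * t^4

noncomputable def jwF (a b t : ℝ) : ℝ :=
  (jwQ a b t / jwPD a b t) / (Real.sqrt (jwPN a b t / jwPD a b t) + 1)

lemma jwPN_sub_jwPD (a b t : ℝ) : jwPN a b t - jwPD a b t = t * jwQ a b t := by
  simp only [jwPN, jwPD, jwQ]; ring

lemma jwGamma2 (y : ℝ) (hy : 0 < y) :
    Real.Gamma (y + 2) = (y + 1) * y * Real.Gamma y := by
  rw [show y + 2 = (y + 1) + 1 by ring, Real.Gamma_add_one (by positivity),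
    Real.Gamma_add_one hy.ne']
  ring

lemma jwAdef_pos (a b x : ℝ) (ha : -1 < a) (hb : -1 < b) (hx : 1 ≤ x) :
    0 < jwAdef a b x := by
  have h1 : 0 < Real.Gamma (x + 1) := Real.Gamma_pos_of_pos (by linarith)
  have h2 : 0 < Real.Gamma (x + a + b + 1) := Real.Gamma_pos_of_pos (by linarith)
  have h3 : 0 < Real.Gamma (x + a + 1) := Real.Gamma_pos_of_pos (by linarith)
  have h4 : 0 < Real.Gamma (x + b + 1) := Real.Gamma_pos_of_pos (by linarith)
  have h5 : 0 < 2 * x + a + b + 1 := by linarith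
  exact div_pos (mul_pos (mul_pos h5 h1) h2) (mul_pos h3 h4)

lemma jwAdef_ratio (a b x : ℝ) (ha : -1 < a) (hb : -1 < b) (hx : 1 ≤ x) :
    jwAdef a b (x + 2) =
      ((2*x + a + b + 5) * (x + 1) * (x + 2) * (x + a + b + 1) * (x + a + b + 2)) /
        ((2*x + a + b + 1) * (x + a + 1) * (x + a + 2) * (x + b + 1) * (x + b + 2)) *
        jwAdef a b x := by
  have h3 : 0 < Real.Gamma (x + a + 1) := Real.Gamma_pos_of_pos (by linarith)
  have h4 : 0 < Real.Gamma (x + b + 1) := Real.Gamma_pos_of_pos (by linarith)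
  simp only [jwAdef]
  rw [show x + 2 + 1 = (x + 1) + 2 by ring, jwGamma2 (x+1) (by linarith),
    show x + 2 + a + b + 1 = (x + a + b + 1) + 2 by ring, jwGamma2 (x+a+b+1) (by linarith),
    show x + 2 + a + 1 = (x + a + 1) + 2 by ring, jwGamma2 (x+a+1) (by linarith),
    show x + 2 + b + 1 = (x + b + 1) + 2 by ring, jwGamma2 (x+b+1) (by linarith)]
  have n1 : x + a + 1 ≠ 0 := ne_of_gt (by linarith)
  have n2 : x + a + 2 ≠ 0 := ne_of_gt (by linarith)
  have n3 : x + b + 1 ≠ 0 := ne_of_gt (by linarith)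
  have n4 : x + b + 2 ≠ 0 := ne_of_gt (by linarith)
  have n5 : 2 * x + a + b + 1 ≠ 0 := ne_of_gt (by linarith)
  have n6 : (x + a + 1 + 1) ≠ 0 := ne_of_gt (by linarith)
  have n7 : (x + b + 1 + 1) ≠ 0 := ne_of_gt (by linarith)
  field_simp
  ring

set_option maxHeartbeats 1000000 in
lemma jw_key (a b x : ℝ) (ha : -1 < a) (hb : -1 < b) (hx : 1 ≤ x) :
    (x + 1) * (Real.sqrt (jwAdef a b (x + 2) / jwAdef a b x) - 1) =
      jwF a b (1 / (x + 1)) ∧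
    jwAdef a b (x + 2) / jwAdef a b x = jwPN a b (1/(x+1)) / jwPD a b (1/(x+1)) := by
  have hx1 : (0:ℝ) < x + 1 := by linarith
  set t : ℝ := 1 / (x + 1) with ht
  have htpos : 0 < t := by positivity
  have hxt : (x + 1) * t = 1 := by rw [ht, mul_one_div_cancel hx1.ne']
  -- positivity of the rational factors
  have hNpos : 0 < (2*x + a + b + 5) * (x + 1) * (x + 2) * (x + a + b + 1) * (x + a + b + 2) := by
    apply mul_pos; apply mul_pos; apply mul_pos; apply mul_pos
    all_goals linarith
  have hDpos : 0 < (2*x + a + b + 1) * (x + a + 1) * (x + a + 2) * (x + b + 1) * (x + b + 2) := by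
    apply mul_pos; apply mul_pos; apply mul_pos; apply mul_pos
    all_goals linarith
  have hPN : jwPN a b t * (x + 1)^5 =
      (2*x + a + b + 5) * (x + 1) * (x + 2) * (x + a + b + 1) * (x + a + b + 2) := by
    simp only [jwPN, ht]
    field_simp
    ring
  have hPD : jwPD a b t * (x + 1)^5 =
      (2*x + a + b + 1) * (x + a + 1) * (x + a + 2) * (x + b + 1) * (x + b + 2) := by
    simp only [jwPD, ht]
    field_simp
    ring
  have hX5 : (0:ℝ) < (x+1)^5 := by positivity
  have hPDt : 0 < jwPD a b t := by
    have h := div_pos hDpos hX5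
    rw [← hPD, mul_div_assoc, div_self hX5.ne', mul_one] at h
    exact h
  have hPNt : 0 < jwPN a b t := by
    have h := div_pos hNpos hX5
    rw [← hPN, mul_div_assoc, div_self hX5.ne', mul_one] at h
    exact h
  have hA : 0 < jwAdef a b x := jwAdef_pos a b x ha hb hx
  have hr : jwAdef a b (x + 2) / jwAdef a b x = jwPN a b t / jwPD a b t := by
    rw [jwAdef_ratio a b x ha hb hx, mul_div_assoc, div_self hA.ne', mul_one,
      div_eq_div_iff hDpos.ne' hPDt.ne']
    linear_combination jwPN a b t * hPD - jwPD a b t * hPN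
  refine ⟨?_, hr⟩
  rw [hr]
  set r : ℝ := jwPN a b t / jwPD a b t with hrdef
  have hrpos : 0 < r := div_pos hPNt hPDt
  set u : ℝ := Real.sqrt r with hu
  have hu2 : u ^ 2 = r := Real.sq_sqrt hrpos.le
  have hupos : 0 < u + 1 := by positivity
  have hq : (x + 1) * (r - 1) = jwQ a b t / jwPD a b t := by
    rw [hrdef, eq_div_iff hPDt.ne', mul_assoc]
    have e1 : (jwPN a b t / jwPD a b t - 1) * jwPD a b t = jwPN a b t - jwPD a b t := by
      field_simp
    rw [e1, jwPN_sub_jwPD]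
    linear_combination jwQ a b t * hxt
  simp only [jwF]
  rw [eq_div_iff hupos.ne', ← hq]
  linear_combination (x + 1) * hu2

/-- Asymptotics of the ratio of normalization constants. -/
theorem jacobiw_ratio_bound (a b : ℝ) (ha : -1 < a) (hb : -1 < b) :
    ∃ C : ℝ, ∀ n : ℕ,
      |jacobiw a b (n + 2) / jacobiw a b n - 1| ≤ C / ((n : ℝ) + 1) := by
  set g : ℕ → ℝ := fun n => ((n : ℝ) + 1) * |jacobiw a b (n + 2) / jacobiw a b n - 1|
    with hgdef
  have hw : ∀ n : ℕ, n ≠ 0 → jacobiw a b n = Real.sqrt (jwAdef a b (n : ℝ)) := by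
    intro n hn; rw [jacobiw, if_neg hn]; rfl
  have hg : ∀ n : ℕ, 1 ≤ n → g n = |jwF a b (1 / ((n : ℝ) + 1))| := by
    intro n hn
    have hx : (1 : ℝ) ≤ (n : ℝ) := by exact_mod_cast hn
    obtain ⟨hkey, -⟩ := jw_key a b (n : ℝ) ha hb hx
    have hA2 := jwAdef_pos a b ((n : ℝ) + 2) ha hb (by linarith)
    have hw1 : jacobiw a b n = Real.sqrt (jwAdef a b (n : ℝ)) := hw n (by omega)
    have hw2 : jacobiw a b (n + 2) = Real.sqrt (jwAdef a b ((n : ℝ) + 2)) := by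
      rw [hw (n + 2) (by omega)]; norm_cast
    have hratio : jacobiw a b (n + 2) / jacobiw a b n =
        Real.sqrt (jwAdef a b ((n : ℝ) + 2) / jwAdef a b (n : ℝ)) := by
      rw [hw1, hw2, Real.sqrt_div hA2.le]
    simp only [hgdef]
    rw [hratio, ← hkey, abs_mul, abs_of_nonneg (by positivity : (0:ℝ) ≤ (n : ℝ) + 1)]
  have c1 : ContinuousAt (fun u => jwQ a b u) 0 := by unfold jwQ; fun_prop
  have c2 : ContinuousAt (fun u => jwPD a b u) 0 := by unfold jwPD; fun_prop
  have c3 : ContinuousAt (fun u => jwPN a b u) 0 := by unfold jwPN; fun_prop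
  have hPD0 : jwPD a b 0 ≠ 0 := by simp [jwPD]
  have c4 : ContinuousAt (fun u => jwQ a b u / jwPD a b u) 0 := c1.div c2 hPD0
  have c5 : ContinuousAt (fun u => Real.sqrt (jwPN a b u / jwPD a b u) + 1) 0 :=
    ((Real.continuous_sqrt.continuousAt).comp (c3.div c2 hPD0)).add continuousAt_const
  have c6 : Real.sqrt (jwPN a b 0 / jwPD a b 0) + 1 ≠ 0 := by positivity
  have c7 : ContinuousAt (fun u => jwF a b u) 0 := c4.div c5 c6
  have hcont : ContinuousAt (fun u => |jwF a b u|) 0 := c7.abs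
  have hx0 : Filter.Tendsto (fun n : ℕ => 1 / ((n : ℝ) + 1)) Filter.atTop (nhds 0) :=
    tendsto_one_div_add_atTop_nhds_zero_nat
  have htend : Filter.Tendsto g Filter.atTop (nhds |jwF a b 0|) := by
    refine (hcont.tendsto.comp hx0).congr' ?_
    filter_upwards [Filter.eventually_ge_atTop 1] with n hn
    exact (hg n hn).symm
  obtain ⟨C, hC⟩ := htend.bddAbove_range
  refine ⟨C, fun n => ?_⟩
  have hgn : g n ≤ C := hC (Set.mem_range_self n)
  have hpos : (0 : ℝ) < (n : ℝ) + 1 := by positivity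
  rw [le_div_iff₀ hpos]
  calc |jacobiw a b (n + 2) / jacobiw a b n - 1| * ((n : ℝ) + 1) = g n := by
        simp only [hgdef]; ring
    _ ≤ C := hgn
end

section
/- Let α, β, γ, δ ≥ −1/2. Then there exists a constant C such that for all n, m ∈ ℕ with n > m and n ≥ 1, |∫_0^{1/(n+1)} p_n^{(γ,δ)}(x) p_m^{(α,β)}(x) dx| ≤ C / n. -/
open Real MeasureTheory

section Aux
open Real Finset


lemma gamma_interp {c x : ℝ} (hc0 : 0 ≤ c) (hc1 : c ≤ 1) (hx : 0 < x) :
    Real.Gamma (x + c) ≤ Real.Gamma x * x ^ c := by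
  have h1 : (0:ℝ) < x + 1 := by linarith
  have key := Real.convexOn_log_Gamma.2 (Set.mem_Ioi.2 hx) (Set.mem_Ioi.2 h1)
    (by linarith : (0:ℝ) ≤ 1 - c) hc0 (by ring)
  have hcomb : (1 - c) • x + c • (x + 1) = x + c := by simp [smul_eq_mul]; ring
  rw [hcomb] at key
  simp only [Function.comp_apply, smul_eq_mul] at key
  have hgx : 0 < Real.Gamma x := Real.Gamma_pos_of_pos hx
  have hgx1 : Real.Gamma (x + 1) = x * Real.Gamma x := Real.Gamma_add_one hx.ne'
  have hgxc : 0 < Real.Gamma (x + c) := Real.Gamma_pos_of_pos (by linarith)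
  have key2 : Real.log (Real.Gamma (x + c)) ≤ Real.log (Real.Gamma x) + c * Real.log x := by
    rw [hgx1, Real.log_mul hx.ne' hgx.ne'] at key
    nlinarith [key]
  calc Real.Gamma (x + c) = Real.exp (Real.log (Real.Gamma (x + c))) := (Real.exp_log hgxc).symm
    _ ≤ Real.exp (Real.log (Real.Gamma x) + c * Real.log x) := Real.exp_le_exp.2 key2
    _ = Real.Gamma x * x ^ c := by
        rw [Real.exp_add, Real.exp_log hgx, Real.rpow_def_of_pos hx, mul_comm (Real.log x) c]

lemma gautschi_nonneg : ∀ (n : ℕ) {c : ℝ}, 0 ≤ c → c ≤ n + 1 → ∀ {x : ℝ}, 1 ≤ x →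
    Real.Gamma (x + c) ≤ (1 + c) ^ n * x ^ c * Real.Gamma x := by
  intro n
  induction n with
  | zero =>
    intro c hc0 hc1 x hx
    have := gamma_interp hc0 (by simpa using hc1) (by linarith : (0:ℝ) < x)
    simpa [mul_comm] using this
  | succ n ih =>
    intro c hc0 hc1 x hx
    have hx0 : (0:ℝ) < x := by linarith
    have hgx : 0 ≤ Real.Gamma x := (Real.Gamma_pos_of_pos hx0).le
    have hxc : 0 ≤ x ^ c := (Real.rpow_pos_of_pos hx0 c).le
    rcases le_or_gt c (n + 1) with h | h
    · calc Real.Gamma (x + c) ≤ (1 + c) ^ n * x ^ c * Real.Gamma x := ih hc0 h hx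
        _ ≤ (1 + c) ^ (n+1) * x ^ c * Real.Gamma x := by
            have : (1 + c) ^ n ≤ (1 + c) ^ (n+1) :=
              pow_le_pow_right₀ (by linarith) (by omega)
            nlinarith [mul_nonneg hxc hgx]
    · have hc1' : 0 ≤ c - 1 := by
        have : (0:ℝ) ≤ (n:ℝ) := Nat.cast_nonneg n
        linarith
      have step : Real.Gamma (x + c) = (x + c - 1) * Real.Gamma (x + (c - 1)) := by
        have : x + c = (x + (c - 1)) + 1 := by ring
        rw [this, Real.Gamma_add_one (by linarith)]
        ring_nf
      have hcast : c ≤ (n:ℝ) + 1 + 1 := by push_cast at hc1; linarith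
      have ihc := ih hc1' (by linarith) hx
      have hpos1 : (0:ℝ) ≤ x + c - 1 := by linarith
      have hb : x + c - 1 ≤ (1 + c) * x := by nlinarith
      have hpow : x ^ (c - 1) * x = x ^ c := by
        rw [← Real.rpow_add_one hx0.ne' (c-1)]; ring_nf
      have hcn : (1 + (c-1)) ^ n ≤ (1 + c) ^ n :=
        pow_le_pow_left₀ (by linarith) (by linarith) n
      have hrp : (0:ℝ) ≤ x ^ (c-1) := (Real.rpow_pos_of_pos hx0 _).le
      calc Real.Gamma (x + c) = (x + c - 1) * Real.Gamma (x + (c - 1)) := step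
        _ ≤ (x + c - 1) * ((1 + (c-1)) ^ n * x ^ (c-1) * Real.Gamma x) := by
            apply mul_le_mul_of_nonneg_left ihc hpos1
        _ ≤ ((1 + c) * x) * ((1 + c) ^ n * x ^ (c-1) * Real.Gamma x) := by
            apply mul_le_mul hb (by nlinarith [mul_nonneg hrp hgx]) (by positivity) (by positivity)
        _ = (1 + c) ^ (n+1) * (x ^ (c-1) * x) * Real.Gamma x := by ring
        _ = (1 + c) ^ (n+1) * x ^ c * Real.Gamma x := by rw [hpow]

lemma gautschi {c : ℝ} (hc : -(1/2) ≤ c) :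
    ∃ C : ℝ, 0 < C ∧ ∀ x : ℝ, 3/2 ≤ x →
      Real.Gamma (x + c) ≤ C * x ^ c * Real.Gamma x := by
  rcases le_or_gt 0 c with h0 | h0
  · obtain ⟨n, hn⟩ := exists_nat_ge c
    refine ⟨(1 + c) ^ n, by positivity, fun x hx => ?_⟩
    exact gautschi_nonneg n h0 (by linarith) (by linarith)
  · refine ⟨3 ^ (1/2 : ℝ), by positivity, fun x hx => ?_⟩
    have hx1 : (1:ℝ) < x := by linarith
    have hx0 : (0:ℝ) < x := by linarith
    have hxm1 : (0:ℝ) < x - 1 := by linarith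
    have h1 : Real.Gamma (x + c) ≤ Real.Gamma (x - 1) * (x - 1) ^ (1 + c) := by
      have := gamma_interp (c := 1 + c) (by linarith) (by linarith) hxm1
      have he : x - 1 + (1 + c) = x + c := by ring
      rwa [he] at this
    have h2 : Real.Gamma x = (x - 1) * Real.Gamma (x - 1) := by
      have h := Real.Gamma_add_one hxm1.ne'
      rwa [sub_add_cancel] at h
    have h3 : (x - 1) ^ (1 + c) = (x - 1) * (x - 1) ^ c := by
      rw [Real.rpow_add hxm1, Real.rpow_one]
    have h4 : (x - 1) ^ c ≤ (x / 3) ^ c := by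
      apply Real.rpow_le_rpow_of_nonpos (by linarith) (by linarith) h0.le
    have h5 : (x / 3 : ℝ) ^ c = 3 ^ (-c) * x ^ c := by
      rw [div_eq_mul_inv, Real.mul_rpow hx0.le (by positivity),
        Real.inv_rpow (by norm_num : (0:ℝ) ≤ 3), Real.rpow_neg (by norm_num : (0:ℝ) ≤ 3)]
      ring
    have h6 : (3:ℝ) ^ (-c) ≤ 3 ^ (1/2 : ℝ) :=
      Real.rpow_le_rpow_of_exponent_le (by norm_num) (by linarith)
    have hgpos : 0 < Real.Gamma (x - 1) := Real.Gamma_pos_of_pos hxm1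
    have hxc : 0 < x ^ c := Real.rpow_pos_of_pos hx0 c
    calc Real.Gamma (x + c) ≤ Real.Gamma (x - 1) * ((x - 1) * (x - 1) ^ c) := by
          rw [← h3]; exact h1
      _ = Real.Gamma x * (x - 1) ^ c := by rw [h2]; ring
      _ ≤ Real.Gamma x * ((3:ℝ) ^ (1/2:ℝ) * x ^ c) := by
          apply mul_le_mul_of_nonneg_left _ (Real.Gamma_pos_of_pos hx0).le
          calc (x - 1) ^ c ≤ (x/3) ^ c := h4
            _ = 3 ^ (-c) * x ^ c := h5
            _ ≤ 3 ^ (1/2:ℝ) * x ^ c := by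
               apply mul_le_mul_of_nonneg_right h6 hxc.le
      _ = 3 ^ (1/2:ℝ) * x ^ c * Real.Gamma x := by ring


noncomputable def dPoch (X : ℝ) (i : ℕ) : ℝ := ∏ j ∈ Finset.range i, (X - j)

noncomputable def jterm (A B : ℝ) (i j : ℕ) (t : ℝ) : ℝ :=
  (-1 : ℝ)^i * dPoch A i * dPoch B j * (1-t) ^ (A - i) * (1+t) ^ (B - j)

lemma hasDerivAt_jterm {A B t : ℝ} (ht : t ∈ Set.Ioo (-1:ℝ) 1) (i j : ℕ) :
    HasDerivAt (jterm A B i j) (jterm A B (i+1) j t + jterm A B i (j+1) t) t := by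
  obtain ⟨ht1, ht2⟩ := ht
  have h1t : (0:ℝ) < 1 - t := by linarith
  have h2t : (0:ℝ) < 1 + t := by linarith
  have hf : HasDerivAt (fun x : ℝ => (1-x) ^ (A - (i:ℝ)))
      ((A - (i:ℝ)) * (1-t) ^ (A - (i:ℝ) - 1) * (-1)) t := by
    have hinner : HasDerivAt (fun x : ℝ => 1 - x) (-1) t := by
      simpa using (hasDerivAt_id t).const_sub 1
    exact (Real.hasDerivAt_rpow_const (p := A - (i:ℝ)) (Or.inl h1t.ne')).comp t hinner
  have hg : HasDerivAt (fun x : ℝ => (1+x) ^ (B - (j:ℝ)))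
      ((B - (j:ℝ)) * (1+t) ^ (B - (j:ℝ) - 1) * 1) t := by
    have hinner : HasDerivAt (fun x : ℝ => 1 + x) 1 t := by
      simpa using (hasDerivAt_id t).const_add 1
    exact (Real.hasDerivAt_rpow_const (p := B - (j:ℝ)) (Or.inl h2t.ne')).comp t hinner
  have hprod := ((hf.const_mul ((-1:ℝ)^i * dPoch A i * dPoch B j)).fun_mul hg)
  have heq : jterm A B i j = fun t : ℝ =>
      ((-1:ℝ)^i * dPoch A i * dPoch B j) * (1-t) ^ (A - i) * (1+t) ^ (B - j) := by
    funext s; simp [jterm]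
  rw [heq]
  refine hprod.congr_deriv ?_
  have e1 : (A - ((i+1:ℕ):ℝ)) = A - (i:ℝ) - 1 := by push_cast; ring
  have e2 : (B - ((j+1:ℕ):ℝ)) = B - (j:ℝ) - 1 := by push_cast; ring
  simp only [jterm, dPoch, Finset.prod_range_succ, e1, e2]
  push_cast
  ring

lemma pascal_sum (n : ℕ) (g : ℕ → ℝ) :
    ∑ i ∈ range (n+1), (n.choose i : ℝ) * (g (i+1) + g i)
      = ∑ i ∈ range (n+2), ((n+1).choose i : ℝ) * g i := by
  have h1 : ∑ i ∈ range (n+2), ((n+1).choose i:ℝ) * g i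
      = ∑ i ∈ range (n+1), ((n+1).choose (i+1):ℝ) * g (i+1) + ((n+1).choose 0:ℝ) * g 0 :=
    Finset.sum_range_succ' _ _
  have h2 : ∑ i ∈ range (n+2), (n.choose i:ℝ) * g i
      = ∑ i ∈ range (n+1), (n.choose (i+1):ℝ) * g (i+1) + (n.choose 0:ℝ) * g 0 :=
    Finset.sum_range_succ' _ _
  have h3 : ∑ i ∈ range (n+2), (n.choose i:ℝ) * g i
      = ∑ i ∈ range (n+1), (n.choose i:ℝ) * g i + (n.choose (n+1):ℝ) * g (n+1) :=
    Finset.sum_range_succ _ _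
  have h4 : (n.choose (n+1):ℝ) = 0 := by simp [Nat.choose_eq_zero_of_lt]
  have h5 : ∀ i, ((n+1).choose (i+1):ℝ) = (n.choose i:ℝ) + (n.choose (i+1):ℝ) := by
    intro i; rw [Nat.choose_succ_succ]; push_cast; ring
  simp only [mul_add, Finset.sum_add_distrib, h1, h5, add_mul]
  have hkey := h2.symm.trans h3
  rw [h4] at hkey
  simp only [Nat.choose_zero_right, Nat.cast_one, one_mul] at hkey ⊢
  linarith

lemma iteratedDeriv_jacobi (A B : ℝ) :
    ∀ (k : ℕ) {t : ℝ}, t ∈ Set.Ioo (-1:ℝ) 1 →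
    iteratedDeriv k (fun t : ℝ => (1 - t) ^ A * (1 + t) ^ B) t
      = ∑ i ∈ Finset.range (k+1), (k.choose i : ℝ) * jterm A B i (k - i) t := by
  intro k
  induction k with
  | zero =>
    intro t _
    simp [iteratedDeriv_zero, jterm, dPoch]
  | succ k ih =>
    intro t ht
    rw [iteratedDeriv_succ]
    have hEv : iteratedDeriv k (fun t : ℝ => (1 - t) ^ A * (1 + t) ^ B)
        =ᶠ[nhds t] (fun s => ∑ i ∈ Finset.range (k+1), (k.choose i : ℝ) * jterm A B i (k - i) s) :=
      Filter.eventuallyEq_of_mem (isOpen_Ioo.mem_nhds ht) (fun s hs => ih hs)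
    rw [hEv.deriv_eq]
    have hd : HasDerivAt
        (fun s => ∑ i ∈ Finset.range (k+1), (k.choose i : ℝ) * jterm A B i (k - i) s)
        (∑ i ∈ Finset.range (k+1), (k.choose i : ℝ) *
          (jterm A B (i+1) (k-i) t + jterm A B i ((k-i)+1) t)) t := by
      apply HasDerivAt.fun_sum
      intro i _
      exact (hasDerivAt_jterm ht i (k-i)).const_mul _
    rw [hd.deriv]
    have hre : ∀ i ∈ Finset.range (k+1),
        (k.choose i : ℝ) * (jterm A B (i+1) (k-i) t + jterm A B i ((k-i)+1) t)
        = (k.choose i : ℝ) * ((fun n => jterm A B n (k+1-n) t) (i+1)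
            + (fun n => jterm A B n (k+1-n) t) i) := by
      intro i hi
      have hik : i ≤ k := by
        simpa [Nat.lt_succ_iff] using Finset.mem_range.1 hi
      have e1 : k + 1 - (i+1) = k - i := by omega
      have e2 : k + 1 - i = (k - i) + 1 := by omega
      simp only [e1, e2]
    rw [Finset.sum_congr rfl hre, pascal_sum k (fun n => jterm A B n (k+1-n) t)]

lemma Gamma_ratio (m : ℕ) (X : ℝ) (hX : 0 < X) :
    Real.Gamma (X + m) = (∏ j ∈ range m, (X + j)) * Real.Gamma X := by
  induction m with
  | zero => simp
  | succ m ih =>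
    have h : X + ((m:ℝ) + 1) = (X + m) + 1 := by ring
    have hpos : (0:ℝ) < X + m := by positivity
    push_cast
    rw [h, Real.Gamma_add_one hpos.ne', ih, Finset.prod_range_succ]
    push_cast
    ring

lemma dPoch_reflect {a : ℝ} (k : ℕ) :
    dPoch (a + k) k = ∏ j ∈ range k, (a + 1 + j) := by
  rw [dPoch, ← Finset.prod_range_reflect (fun j => a + 1 + (j:ℝ)) k]
  apply Finset.prod_congr rfl
  intro j hj
  have hjk : j < k := Finset.mem_range.1 hj
  have : ((k - 1 - j : ℕ):ℝ) = (k:ℝ) - 1 - j := by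
    have h1 : j ≤ k - 1 := by omega
    have h2 : (1:ℕ) ≤ k := by omega
    push_cast [Nat.cast_sub h1, Nat.cast_sub h2]
    ring
  rw [this]
  ring

lemma dPoch_eq_Gamma {a : ℝ} (ha : -1 < a) (k : ℕ) :
    dPoch (a + k) k * Real.Gamma (a + 1) = Real.Gamma (a + 1 + k) := by
  rw [dPoch_reflect, Gamma_ratio k (a+1) (by linarith)]

lemma dPoch_pos {a : ℝ} (ha : -(1/2 : ℝ) ≤ a) {i k : ℕ} (hik : i ≤ k) :
    0 < dPoch (a + k) i := by
  apply Finset.prod_pos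
  intro j hj
  have hjk : j < i := Finset.mem_range.1 hj
  have : (j:ℝ) ≤ (k:ℝ) - 1 := by
    have : j + 1 ≤ k := by omega
    have := Nat.cast_le (α := ℝ).2 this
    push_cast at this
    linarith
  linarith

lemma dPoch_ge {a : ℝ} (ha : -(1/2 : ℝ) ≤ a) (m : ℕ) :
    (m.factorial : ℝ) / 2 ^ m ≤ dPoch (a + m) m := by
  rw [dPoch_reflect]
  have h1 : ∏ j ∈ range m, (((j:ℝ) + 1) / 2) ≤ ∏ j ∈ range m, (a + 1 + j) := by
    apply Finset.prod_le_prod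
    · intro j _; positivity
    · intro j _; linarith [Nat.cast_nonneg (α := ℝ) j]
  have h2 : ∏ j ∈ range m, (((j:ℝ) + 1) / 2) = (m.factorial : ℝ) / 2 ^ m := by
    rw [Finset.prod_div_distrib, Finset.prod_const]
    congr 1
    · rw [← Finset.prod_range_add_one_eq_factorial m]
      push_cast
      rfl
    · simp [Finset.card_range]
  linarith

lemma dPoch_split_le {a : ℝ} (ha : -(1/2 : ℝ) ≤ a) {i k : ℕ} (hik : i ≤ k) :
    dPoch (a + k) i * (((k-i).factorial : ℝ) / 2 ^ (k-i)) ≤ dPoch (a + k) k := by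
  have hcast : ((k - i : ℕ):ℝ) = (k:ℝ) - i := by
    push_cast [Nat.cast_sub hik]; ring
  have hsplit2 : dPoch (a + k) k = dPoch (a + k) i * dPoch (a + ((k - i : ℕ):ℝ)) (k - i) := by
    rw [dPoch, dPoch, dPoch]
    have hik' : k = i + (k - i) := by omega
    rw [show (range k) = range (i + (k - i)) by rw [← hik'],
      Finset.prod_range_add (fun j => (a + k) - (j:ℝ)) i (k - i)]
    congr 1
    apply Finset.prod_congr rfl
    intro j _
    rw [hcast]
    push_cast
    ring
  rw [hsplit2]
  apply mul_le_mul_of_nonneg_left _ (dPoch_pos ha hik).le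
  exact dPoch_ge ha (k - i)

lemma dPoch_le_pow {b : ℝ} (hb : -(1/2 : ℝ) ≤ b) {j k : ℕ} (hjk : j ≤ k) :
    dPoch (b + k) j ≤ (b + k) ^ j := by
  rw [dPoch]
  calc ∏ l ∈ range j, ((b + k) - l) ≤ ∏ l ∈ range j, (b + k) := by
        apply Finset.prod_le_prod
        · intro l hl
          have hlj : l < j := Finset.mem_range.1 hl
          have : (l:ℝ) ≤ (k:ℝ) - 1 := by
            have : l + 1 ≤ k := by omega
            have := Nat.cast_le (α := ℝ).2 this
            push_cast at this
            linarith
          linarith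
        · intro l _
          linarith [Nat.cast_nonneg (α := ℝ) l]
    _ = (b + k) ^ j := by rw [Finset.prod_const, Finset.card_range]

lemma jacobiP_repr (a b : ℝ) (k : ℕ) {z : ℝ} (hz : z ∈ Set.Ioo (-1:ℝ) 1) :
    jacobiP a b k z = ((-1:ℝ)^k / (2^k * (k.factorial : ℝ))) *
      ∑ i ∈ range (k+1), (k.choose i : ℝ) *
        ((-1:ℝ)^i * dPoch (a + k) i * dPoch (b + k) (k-i) * (1-z)^(k-i) * (1+z)^i) := by
  obtain ⟨hz1, hz2⟩ := hz
  have h1z : (0:ℝ) < 1 - z := by linarith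
  have h2z : (0:ℝ) < 1 + z := by linarith
  rw [jacobiP, iteratedDeriv_jacobi (a + k) (b + k) k ⟨hz1, hz2⟩]
  rw [mul_assoc, mul_assoc]
  rw [Finset.mul_sum, Finset.mul_sum]
  congr 1
  apply Finset.sum_congr rfl
  intro i hi
  have hik : i ≤ k := by simpa [Nat.lt_succ_iff] using Finset.mem_range.1 hi
  rw [jterm]
  have e1 : (1-z) ^ (-a) * (1-z) ^ ((a + (k:ℝ)) - i) = (1-z)^((k - i : ℕ)) := by
    rw [← Real.rpow_natCast (1-z) (k-i), ← Real.rpow_add h1z]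
    congr 1
    push_cast [Nat.cast_sub hik]
    ring
  have e2 : (1+z) ^ (-b) * (1+z) ^ ((b + (k:ℝ)) - (k - i : ℕ)) = (1+z)^(i : ℕ) := by
    rw [← Real.rpow_natCast (1+z) i, ← Real.rpow_add h2z]
    congr 1
    push_cast [Nat.cast_sub hik]
    ring
  calc (1-z) ^ (-a) * ((1+z) ^ (-b) * ((k.choose i : ℝ) *
        ((-1:ℝ)^i * dPoch (a + (k:ℝ)) i * dPoch (b + (k:ℝ)) (k-i) *
          (1-z) ^ ((a + (k:ℝ)) - i) * (1+z) ^ ((b + (k:ℝ)) - (k - i : ℕ)))))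
      = (k.choose i : ℝ) * ((-1:ℝ)^i * dPoch (a + (k:ℝ)) i * dPoch (b + (k:ℝ)) (k-i) *
          ((1-z) ^ (-a) * (1-z) ^ ((a + (k:ℝ)) - i)) *
          ((1+z) ^ (-b) * (1+z) ^ ((b + (k:ℝ)) - (k - i : ℕ)))) := by ring
    _ = _ := by rw [e1, e2]

lemma one_sub_cos_eq (x : ℝ) : 1 - Real.cos x = 2 * Real.sin (x/2) ^ 2 := by
  have h := Real.cos_sq (x/2)
  rw [show 2*(x/2) = x by ring] at h
  have h2 := Real.sin_sq_add_cos_sq (x/2)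
  linarith

lemma fact_le_pow (i : ℕ) : ∀ j : ℕ, (i+j).factorial ≤ i.factorial * (i+j+1)^j := by
  intro j
  induction j with
  | zero => simp
  | succ j ih =>
    have h1 : (i + (j+1)).factorial = (i+j+1) * (i+j).factorial := by
      rw [show i + (j+1) = (i+j)+1 by omega, Nat.factorial_succ]
    rw [h1]
    calc (i+j+1) * (i+j).factorial ≤ (i+j+1) * (i.factorial * (i+j+1)^j) :=
          Nat.mul_le_mul_left _ ih
      _ ≤ (i+(j+1)+1) * (i.factorial * (i+(j+1)+1)^j) := by
          apply Nat.mul_le_mul (by omega)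
          apply Nat.mul_le_mul_left
          apply Nat.pow_le_pow_left (by omega)
      _ = i.factorial * (i+(j+1)+1)^(j+1) := by ring

lemma choose_le_pow_real {i k : ℕ} (hik : i ≤ k) :
    (k.choose i : ℝ) ≤ ((k:ℝ)+1)^(k-i) := by
  set j := k - i with hj
  have hij : i + j = k := by omega
  have h1 : k.factorial ≤ i.factorial * (k+1)^j := by
    have := fact_le_pow i j
    rw [hij] at this
    simpa [hij] using this
  have h2 : k.choose i * (i.factorial * j.factorial) = k.factorial := by
    have := Nat.choose_mul_factorial_mul_factorial hik
    rw [← this]; ring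
  have h3 : k.choose i * (i.factorial * j.factorial) ≤ i.factorial * (k+1)^j := by omega
  have h4 : k.choose i * j.factorial ≤ (k+1)^j := by
    have hfi : 0 < i.factorial := Nat.factorial_pos i
    calc k.choose i * j.factorial
        = (i.factorial * (k.choose i * j.factorial)) / i.factorial := by
          rw [Nat.mul_div_cancel_left _ hfi]
      _ ≤ (i.factorial * (k+1)^j) / i.factorial := by
          apply Nat.div_le_div_right
          calc i.factorial * (k.choose i * j.factorial)
              = k.choose i * (i.factorial * j.factorial) := by ring
            _ ≤ i.factorial * (k+1)^j := h3
      _ = (k+1)^j := Nat.mul_div_cancel_left _ hfi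
  have h5 : k.choose i ≤ (k+1)^j :=
    le_trans (Nat.le_mul_of_pos_right _ (Nat.factorial_pos j)) h4
  calc (k.choose i : ℝ) ≤ (((k+1)^j : ℕ) : ℝ) := by exact_mod_cast h5
    _ = ((k:ℝ)+1)^j := by push_cast; ring

set_option maxHeartbeats 2000000 in
lemma jacobiP_cos_le {a b : ℝ} (ha : -(1/2:ℝ) ≤ a) (hb : -(1/2:ℝ) ≤ b) {k : ℕ} (hk : 1 ≤ k)
    {x : ℝ} (hx0 : 0 < x) (hx1 : x ≤ 1/((k:ℝ)+1)) :
    |jacobiP a b k (Real.cos x)| ≤ dPoch (a + k) k / (k.factorial : ℝ) * Real.exp (1 + max b 0) := by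
  have hk1 : (1:ℝ) ≤ (k:ℝ) := by exact_mod_cast hk
  have hxhalf : x ≤ 1/2 := by
    have : 1/((k:ℝ)+1) ≤ 1/2 := by
      apply one_div_le_one_div_of_le <;> linarith
    linarith
  set z := Real.cos x with hzdef
  have hsin_pos : 0 < Real.sin (x/2) := by
    apply Real.sin_pos_of_pos_of_lt_pi (by linarith)
    have := Real.pi_gt_three
    linarith
  have hsin_le : Real.sin (x/2) ≤ x/2 := by
    have := Real.sin_le (by linarith : 0 ≤ x/2)
    linarith
  have h1mz : 1 - z = 2 * Real.sin (x/2)^2 := one_sub_cos_eq x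
  have hz2 : z < 1 := by nlinarith
  have hzpos : 0 < z := by
    apply Real.cos_pos_of_mem_Ioo
    constructor
    · have := Real.pi_gt_three; linarith
    · have := Real.pi_gt_three; linarith
  have hz1 : (-1:ℝ) < z := by linarith
  have h1mz_le : 1 - z ≤ x^2/2 := by
    rw [h1mz]; nlinarith
  have h1mz_nonneg : (0:ℝ) ≤ 1 - z := by linarith
  have h1pz : (0:ℝ) < 1 + z := by linarith
  have hx2 : x^2 ≤ (1/((k:ℝ)+1))^2 := by nlinarith
  set D : ℝ := 1 + max b 0 with hD
  have hD1 : (1:ℝ) ≤ D := le_add_of_nonneg_right (le_max_right b 0)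
  have hbk : b + (k:ℝ) ≤ D * ((k:ℝ)+1) := by
    have : b ≤ max b 0 := le_max_left _ _
    have h0 : 0 ≤ max b 0 := le_max_right _ _
    nlinarith
  have hbk0 : (0:ℝ) ≤ b + k := by linarith
  -- the core estimate
  have hbase : ((k:ℝ)+1) * ((b + (k:ℝ)) * (x^2/2)) ≤ D := by
    have hkpos : (0:ℝ) < (k:ℝ)+1 := by linarith
    have h1 : (b + (k:ℝ)) * (x^2/2) ≤ D * ((k:ℝ)+1) * ((1/((k:ℝ)+1))^2 / 2) := by
      apply mul_le_mul hbk (by linarith) (by positivity) (by positivity)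
    have h2 : D * ((k:ℝ)+1) * ((1/((k:ℝ)+1))^2/2) = D / (2*((k:ℝ)+1)) := by
      field_simp
    have h4 : ((k:ℝ)+1) * ((b + (k:ℝ)) * (x^2/2)) ≤ ((k:ℝ)+1) * (D / (2*((k:ℝ)+1))) := by
      apply mul_le_mul_of_nonneg_left _ (by linarith)
      linarith
    have h5 : ((k:ℝ)+1) * (D / (2*((k:ℝ)+1))) = D/2 := by
      field_simp
    linarith
  rw [jacobiP_repr a b k ⟨hz1, hz2⟩]
  rw [abs_mul]
  have habs1 : |(-1:ℝ)^k / (2^k * (k.factorial:ℝ))| = 1 / (2^k * (k.factorial:ℝ)) := by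
    rw [abs_div, abs_pow, abs_neg, abs_one, one_pow, abs_of_pos (by positivity)]
  rw [habs1]
  have hterm : ∀ i ∈ range (k+1),
      |(k.choose i : ℝ) * ((-1:ℝ)^i * dPoch (a + k) i * dPoch (b + k) (k-i) *
        (1-z)^(k-i) * (1+z)^i)|
      ≤ (2^k * (k.factorial:ℝ)) * (dPoch (a + k) k / (k.factorial:ℝ) * D^(k-i) / ((k-i).factorial : ℝ)) := by
    intro i hi
    have hik : i ≤ k := by simpa [Nat.lt_succ_iff] using Finset.mem_range.1 hi
    set j := k - i with hj
    have hij : i + j = k := by omega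
    have hdpa_i : 0 < dPoch (a + k) i := dPoch_pos ha hik
    have hdpa_k : 0 < dPoch (a + k) k := dPoch_pos ha le_rfl
    have hdpb : 0 < dPoch (b + k) j := dPoch_pos hb (by omega)
    have habs : |(k.choose i : ℝ) * ((-1:ℝ)^i * dPoch (a + k) i * dPoch (b + k) j *
        (1-z)^j * (1+z)^i)|
        = (k.choose i : ℝ) * (dPoch (a + k) i * dPoch (b + k) j * (1-z)^j * (1+z)^i) := by
      rw [abs_mul, abs_mul, abs_mul, abs_mul, abs_mul, abs_pow, abs_neg, abs_one, one_pow,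
        Nat.abs_cast, abs_of_pos hdpa_i, abs_of_pos hdpb,
        abs_of_nonneg (pow_nonneg h1mz_nonneg j), abs_of_nonneg (pow_nonneg h1pz.le i)]
      ring
    rw [habs]
    -- step 1 : replace dPoch i
    have t1 : dPoch (a + k) i ≤ dPoch (a + k) k * (2^j / ((j.factorial : ℝ))) := by
      have h := dPoch_split_le ha hik
      have hfpos : (0:ℝ) < (j.factorial : ℝ) / 2^j := by positivity
      have := mul_le_mul_of_nonneg_right h (by positivity : (0:ℝ) ≤ 2^j / (j.factorial:ℝ))
      calc dPoch (a + k) i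
          = dPoch (a + k) i * ((j.factorial:ℝ)/2^j) * (2^j/(j.factorial:ℝ)) := by
            field_simp
        _ ≤ dPoch (a + k) k * (2^j/(j.factorial:ℝ)) := this
    have t2 : dPoch (b + k) j ≤ (b + k)^j := dPoch_le_pow hb (by omega)
    have t3 : (1-z)^j ≤ (x^2/2)^j := pow_le_pow_left₀ h1mz_nonneg h1mz_le j
    have t4 : (1+z)^i ≤ 2^i := pow_le_pow_left₀ h1pz.le (by linarith) i
    have step1 : (k.choose i : ℝ) * (dPoch (a + k) i * dPoch (b + k) j * (1-z)^j * (1+z)^i)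
        ≤ (k.choose i : ℝ) * ((dPoch (a + k) k * (2^j / ((j.factorial : ℝ)))) *
            ((b + k)^j) * ((x^2/2)^j) * (2^i)) := by
      apply mul_le_mul_of_nonneg_left _ (Nat.cast_nonneg _)
      apply mul_le_mul
      · apply mul_le_mul
        · exact mul_le_mul t1 t2 hdpb.le (by positivity)
        · exact t3
        · exact pow_nonneg h1mz_nonneg j
        · positivity
      · exact t4
      · exact pow_nonneg h1pz.le i
      · positivity
    -- step 2 : algebra
    have hCn : (k.choose i : ℝ) ≤ ((k:ℝ)+1)^j := choose_le_pow_real hik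
    have hpow2 : (2:ℝ)^i = 2^k / 2^j := by
      rw [eq_div_iff (by positivity : ((2:ℝ)^j) ≠ 0), ← pow_add, hij]
    have hW : (0:ℝ) ≤ (b + k) * (x^2/2) := by positivity
    have hCnW : (k.choose i : ℝ) * ((b + k) * (x^2/2))^j ≤ D^j := by
      calc (k.choose i : ℝ) * ((b + k) * (x^2/2))^j
          ≤ ((k:ℝ)+1)^j * ((b + k) * (x^2/2))^j :=
            mul_le_mul_of_nonneg_right hCn (pow_nonneg hW j)
        _ = (((k:ℝ)+1) * ((b + k) * (x^2/2)))^j := (mul_pow _ _ j).symm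
        _ ≤ D^j := pow_le_pow_left₀ (by positivity) hbase j
    have step2 : (k.choose i : ℝ) * ((dPoch (a + k) k * (2^j / ((j.factorial : ℝ)))) *
            ((b + k)^j) * ((x^2/2)^j) * (2^i))
        ≤ (2^k * (k.factorial:ℝ)) * (dPoch (a + k) k / (k.factorial:ℝ) * D^j / ((j.factorial : ℝ))) := by
      have hrw : (k.choose i : ℝ) * ((dPoch (a + k) k * (2^j / ((j.factorial : ℝ)))) *
            ((b + k)^j) * ((x^2/2)^j) * (2^i))
          = 2^k * ((k.choose i:ℝ) * (dPoch (a + k) k * ((b+k) * (x^2/2))^j / (j.factorial : ℝ))) := by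
        rw [hpow2, mul_pow]
        have hjf : ((j.factorial : ℝ)) ≠ 0 := by positivity
        have h2j : ((2:ℝ)^j) ≠ 0 := by positivity
        field_simp
      have hrw2 : (2:ℝ)^k * (k.factorial:ℝ) * (dPoch (a + k) k / (k.factorial:ℝ) * D^j / ((j.factorial : ℝ)))
          = 2^k * (dPoch (a + k) k * D^j / (j.factorial : ℝ)) := by
        have : ((k.factorial:ℝ)) ≠ 0 := by positivity
        field_simp
      rw [hrw, hrw2]
      apply mul_le_mul_of_nonneg_left _ (by positivity : (0:ℝ) ≤ 2^k)
      have hley : (k.choose i:ℝ) * (dPoch (a + k) k * ((b+k) * (x^2/2))^j / (j.factorial : ℝ))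
          = dPoch (a + k) k * ((k.choose i:ℝ) * ((b+k) * (x^2/2))^j) / (j.factorial : ℝ) := by
        ring
      rw [hley]
      apply div_le_div_of_nonneg_right ?_ (by positivity)
      · exact mul_le_mul_of_nonneg_left hCnW hdpa_k.le
    exact le_trans step1 step2
  -- now sum up
  have hsum1 : |∑ i ∈ range (k+1), (k.choose i : ℝ) *
      ((-1:ℝ)^i * dPoch (a + k) i * dPoch (b + k) (k-i) * (1-z)^(k-i) * (1+z)^i)|
      ≤ ∑ i ∈ range (k+1), (2^k * (k.factorial:ℝ)) *
          (dPoch (a + k) k / (k.factorial:ℝ) * D^(k-i) / ((k-i).factorial : ℝ)) :=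
    le_trans (Finset.abs_sum_le_sum_abs _ _) (Finset.sum_le_sum hterm)
  have hCpos : (0:ℝ) < 2^k * (k.factorial:ℝ) := by positivity
  have hdpa_k : 0 < dPoch (a + (k:ℝ)) k := dPoch_pos ha le_rfl
  have hsum2 : ∑ i ∈ range (k+1), (2^k * (k.factorial:ℝ)) *
          (dPoch (a + k) k / (k.factorial:ℝ) * D^(k-i) / ((k-i).factorial : ℝ))
      = (2^k * (k.factorial:ℝ)) * (dPoch (a + k) k / (k.factorial:ℝ) *
          ∑ j ∈ range (k+1), D^j / (j.factorial : ℝ)) := by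
    rw [← Finset.sum_range_reflect (fun j => D^j / (j.factorial : ℝ)) (k+1)]
    rw [Finset.mul_sum, Finset.mul_sum]
    apply Finset.sum_congr rfl
    intro i hi
    have hik : i ≤ k := by simpa [Nat.lt_succ_iff] using Finset.mem_range.1 hi
    have : k + 1 - 1 - i = k - i := by omega
    rw [this]
    ring
  have hexp : ∑ j ∈ range (k+1), D^j / (j.factorial : ℝ) ≤ Real.exp D :=
    Real.sum_le_exp_of_nonneg (by positivity) (k+1)
  calc 1/(2^k * (k.factorial:ℝ)) * |∑ i ∈ range (k+1), (k.choose i : ℝ) *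
      ((-1:ℝ)^i * dPoch (a + k) i * dPoch (b + k) (k-i) * (1-z)^(k-i) * (1+z)^i)|
      ≤ 1/(2^k * (k.factorial:ℝ)) * ((2^k * (k.factorial:ℝ)) * (dPoch (a + k) k / (k.factorial:ℝ) *
          ∑ j ∈ range (k+1), D^j / (j.factorial : ℝ))) := by
        apply mul_le_mul_of_nonneg_left _ (by positivity)
        rw [← hsum2]
        exact hsum1
    _ = dPoch (a + k) k / (k.factorial:ℝ) * ∑ j ∈ range (k+1), D^j / (j.factorial : ℝ) := by
        field_simp
    _ ≤ dPoch (a + k) k / (k.factorial:ℝ) * Real.exp D :=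
        mul_le_mul_of_nonneg_left hexp (by positivity)

lemma shift_rpow (a b : ℝ) (hb : -(1/2:ℝ) ≤ b) :
    ∃ C : ℝ, 0 < C ∧ ∀ u : ℝ, 2 ≤ u → (u + b) ^ a ≤ C * u ^ a := by
  rcases le_or_gt 0 a with h0 | h0
  · refine ⟨(1 + |b|) ^ a, by positivity, fun u hu => ?_⟩
    have hu0 : (0:ℝ) < u := by linarith
    have h1 : u + b ≤ (1 + |b|) * u := by
      have h2 : b ≤ |b| := le_abs_self b
      have h3 : 0 ≤ |b| := abs_nonneg b
      nlinarith
    calc (u + b) ^ a ≤ ((1 + |b|) * u) ^ a := by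
          apply Real.rpow_le_rpow (by linarith [abs_nonneg b, le_abs_self b, neg_abs_le b]) h1 h0
      _ = (1 + |b|) ^ a * u ^ a := Real.mul_rpow (by positivity) hu0.le
  · refine ⟨(2:ℝ) ^ (-a), by positivity, fun u hu => ?_⟩
    have hu0 : (0:ℝ) < u := by linarith
    have h1 : u / 2 ≤ u + b := by linarith
    have h2 : (u + b) ^ a ≤ (u / 2) ^ a :=
      Real.rpow_le_rpow_of_nonpos (by linarith) h1 h0.le
    have h3 : (u / 2 : ℝ) ^ a = 2 ^ (-a) * u ^ a := by
      rw [div_eq_mul_inv, mul_comm, Real.mul_rpow (by norm_num) hu0.le,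
        Real.inv_rpow (by norm_num), Real.rpow_neg (by norm_num)]
    linarith

lemma jacobiw_mul_le {a b : ℝ} (ha : -(1/2:ℝ) ≤ a) (hb : -(1/2:ℝ) ≤ b) :
    ∃ Cw : ℝ, 0 ≤ Cw ∧ ∀ k : ℕ, 1 ≤ k →
      jacobiw a b k * (dPoch (a + k) k / (k.factorial : ℝ)) ≤
        Cw * ((k:ℝ)+1) ^ (a + 1/2 : ℝ) := by
  obtain ⟨C1, hC1pos, hC1⟩ := gautschi ha
  obtain ⟨C2, hC2pos, hC2⟩ := shift_rpow a b hb
  have hg : 0 < Real.Gamma (a + 1) := Real.Gamma_pos_of_pos (by linarith)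
  set C4 : ℝ := (a + b + 3) * C1^2 * C2 / (Real.Gamma (a+1))^2 with hC4
  have hC4pos : 0 < C4 := by
    apply div_pos
    · apply mul_pos (mul_pos (by linarith) (by positivity)) hC2pos
    · positivity
  refine ⟨Real.sqrt C4, Real.sqrt_nonneg _, fun k hk => ?_⟩
  have hk1 : (1:ℝ) ≤ (k:ℝ) := by exact_mod_cast hk
  set u : ℝ := (k:ℝ) + 1 with hu
  have hu2 : (2:ℝ) ≤ u := by simp [hu]; linarith
  have hu0 : (0:ℝ) < u := by linarith
  set G1 := Real.Gamma ((k:ℝ) + 1) with hG1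
  set Ga := Real.Gamma ((k:ℝ) + a + 1) with hGa
  set Gb := Real.Gamma ((k:ℝ) + b + 1) with hGb
  set Gab := Real.Gamma ((k:ℝ) + a + b + 1) with hGab
  have hG1pos : 0 < G1 := Real.Gamma_pos_of_pos (by linarith)
  have hGapos : 0 < Ga := Real.Gamma_pos_of_pos (by linarith)
  have hGbpos : 0 < Gb := Real.Gamma_pos_of_pos (by linarith)
  have hGabpos : 0 < Gab := Real.Gamma_pos_of_pos (by linarith)
  -- identify the factorial and the Pochhammer
  have hfact : ((k.factorial : ℝ)) = G1 := by
    rw [hG1, ← Real.Gamma_nat_eq_factorial k]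
  have hQ : dPoch (a + k) k = Ga / Real.Gamma (a + 1) := by
    have h := dPoch_eq_Gamma (by linarith : (-1:ℝ) < a) k
    have he : a + 1 + (k:ℝ) = (k:ℝ) + a + 1 := by ring
    rw [he] at h
    field_simp [hGa]
    linarith [h]
  -- w value
  have hw : jacobiw a b k = Real.sqrt ((2 * (k:ℝ) + a + b + 1) * G1 * Gab / (Ga * Gb)) := by
    rw [jacobiw, if_neg (by omega)]
  -- Gamma ratio bounds
  have hb1 : Ga ≤ C1 * u ^ a * G1 := by
    have := hC1 u (by linarith)
    have he : u + a = (k:ℝ) + a + 1 := by rw [hu]; ring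
    have he2 : Real.Gamma u = G1 := by rw [hG1, hu]
    rw [he, he2] at this
    exact this
  have hb2 : Gab ≤ C1 * C2 * u ^ a * Gb := by
    have h1 := hC1 ((k:ℝ) + b + 1) (by linarith)
    have he : (k:ℝ) + b + 1 + a = (k:ℝ) + a + b + 1 := by ring
    rw [he] at h1
    have h2 : ((k:ℝ) + b + 1) ^ a ≤ C2 * u ^ a := by
      have := hC2 u hu2
      have he2 : u + b = (k:ℝ) + b + 1 := by rw [hu]; ring
      rw [he2] at this
      exact this
    calc Gab ≤ C1 * ((k:ℝ) + b + 1) ^ a * Gb := h1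
      _ ≤ C1 * (C2 * u ^ a) * Gb := by
          apply mul_le_mul_of_nonneg_right _ hGbpos.le
          exact mul_le_mul_of_nonneg_left h2 hC1pos.le
      _ = C1 * C2 * u ^ a * Gb := by ring
  have hcoef : 2 * (k:ℝ) + a + b + 1 ≤ (a + b + 3) * u := by
    have : (0:ℝ) ≤ a + b + 1 := by linarith
    nlinarith
  have hcoefpos : 0 < 2 * (k:ℝ) + a + b + 1 := by linarith
  -- the squared bound
  have hEQ : ((2 * (k:ℝ) + a + b + 1) * G1 * Gab / (Ga * Gb)) *
      (Ga / Real.Gamma (a+1) / G1)^2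
      = (2 * (k:ℝ) + a + b + 1) * Gab * Ga / (Gb * G1 * (Real.Gamma (a+1))^2) := by
    field_simp
  have hupow : 0 < u ^ a := Real.rpow_pos_of_pos hu0 a
  have hsq : ((2 * (k:ℝ) + a + b + 1) * G1 * Gab / (Ga * Gb)) *
      (Ga / Real.Gamma (a+1) / G1)^2 ≤ C4 * u ^ (2*a + 1 : ℝ) := by
    rw [hEQ]
    have hnum : (2 * (k:ℝ) + a + b + 1) * Gab * Ga
        ≤ ((a + b + 3) * u) * (C1 * C2 * u ^ a * Gb) * (C1 * u ^ a * G1) := by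
      have hnn1 : (0:ℝ) ≤ (a + b + 3) * u := mul_nonneg (by linarith) hu0.le
      apply mul_le_mul
      · apply mul_le_mul hcoef hb2 hGabpos.le hnn1
      · exact hb1
      · exact hGapos.le
      · apply mul_nonneg hnn1
        positivity
    have hden : (0:ℝ) < Gb * G1 * (Real.Gamma (a+1))^2 := by positivity
    rw [div_le_iff₀ hden]
    calc (2 * (k:ℝ) + a + b + 1) * Gab * Ga
        ≤ ((a + b + 3) * u) * (C1 * C2 * u ^ a * Gb) * (C1 * u ^ a * G1) := hnum
      _ = (a + b + 3) * C1^2 * C2 * (u ^ a * u ^ a * u) * (Gb * G1) := by ring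
      _ = C4 * u ^ (2*a + 1 : ℝ) * (Gb * G1 * (Real.Gamma (a+1))^2) := by
          have h1 : u ^ a * u ^ a * u = u ^ (2*a+1 : ℝ) := by
            rw [← Real.rpow_add hu0, ← Real.rpow_add_one hu0.ne']
            norm_num
            ring_nf
          rw [h1, hC4]
          field_simp
  -- conclude via sqrt
  have hQpos : 0 < Ga / Real.Gamma (a+1) / G1 := by positivity
  have hEpos : (0:ℝ) ≤ (2 * (k:ℝ) + a + b + 1) * G1 * Gab / (Ga * Gb) := by positivity
  rw [hw, hQ, hfact]
  have hstep : Real.sqrt ((2 * (k:ℝ) + a + b + 1) * G1 * Gab / (Ga * Gb)) *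
      (Ga / Real.Gamma (a+1) / G1)
      = Real.sqrt (((2 * (k:ℝ) + a + b + 1) * G1 * Gab / (Ga * Gb)) *
          (Ga / Real.Gamma (a+1) / G1)^2) := by
    rw [Real.sqrt_mul hEpos, Real.sqrt_sq hQpos.le]
  have hfixdiv : Ga / Real.Gamma (a+1) / G1 = Ga / Real.Gamma (a+1) * G1⁻¹ := by
    rw [div_eq_mul_inv]
  calc Real.sqrt ((2 * (k:ℝ) + a + b + 1) * G1 * Gab / (Ga * Gb)) *
        (Ga / Real.Gamma (a+1) / G1)
      = Real.sqrt (((2 * (k:ℝ) + a + b + 1) * G1 * Gab / (Ga * Gb)) *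
          (Ga / Real.Gamma (a+1) / G1)^2) := hstep
    _ ≤ Real.sqrt (C4 * u ^ (2*a + 1 : ℝ)) := Real.sqrt_le_sqrt hsq
    _ = Real.sqrt C4 * u ^ (a + 1/2 : ℝ) := by
        rw [Real.sqrt_mul hC4pos.le]
        congr 1
        rw [Real.sqrt_eq_rpow, ← Real.rpow_mul hu0.le]
        congr 1
        ring

set_option maxHeartbeats 1000000 in
lemma jacobiFn_bounded {a b : ℝ} (ha : -(1/2:ℝ) ≤ a) (hb : -(1/2:ℝ) ≤ b) :
    ∃ C : ℝ, 0 ≤ C ∧ ∀ (k : ℕ) (x : ℝ), 0 < x → x ≤ 1/((k:ℝ)+1) →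
      |jacobiFn a b k x| ≤ C := by
  obtain ⟨Cw, hCw0, hCw⟩ := jacobiw_mul_le ha hb
  set E : ℝ := Real.exp (1 + max b 0) with hE
  have hEpos : 0 < E := Real.exp_pos _
  refine ⟨max (jacobiw a b 0) (Cw * E), le_trans (Real.sqrt_nonneg _)
    (by rw [jacobiw, if_pos rfl]; exact le_max_left _ _), fun k x hx0 hx1 => ?_⟩
  have hkn : (0:ℝ) ≤ (k:ℝ) := Nat.cast_nonneg k
  have hx1' : x ≤ 1 := by
    have h1 : 1/((k:ℝ)+1) ≤ 1 := by
      rw [div_le_one (by linarith)]; linarith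
    linarith
  have hpi := Real.pi_gt_three
  have hsin_pos : 0 < Real.sin (x/2) :=
    Real.sin_pos_of_pos_of_lt_pi (by linarith) (by linarith)
  have hsin_le1 : Real.sin (x/2) ≤ 1 := Real.sin_le_one _
  have hsin_lex : Real.sin (x/2) ≤ x/2 := by
    have := Real.sin_le (by linarith : 0 ≤ x/2); linarith
  have hcos_pos : 0 < Real.cos (x/2) := by
    apply Real.cos_pos_of_mem_Ioo
    constructor <;> [linarith; linarith]
  have hcos_le1 : Real.cos (x/2) ≤ 1 := Real.cos_le_one _
  have he0 : (0:ℝ) ≤ a + 1/2 := by linarith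
  have hf0 : (0:ℝ) ≤ b + 1/2 := by linarith
  have hspow : (0:ℝ) ≤ Real.sin (x/2) ^ (a + 1/2 : ℝ) := (Real.rpow_pos_of_pos hsin_pos _).le
  have hcpow1 : Real.cos (x/2) ^ (b + 1/2 : ℝ) ≤ 1 :=
    Real.rpow_le_one hcos_pos.le hcos_le1 hf0
  have hcpow0 : (0:ℝ) ≤ Real.cos (x/2) ^ (b + 1/2 : ℝ) := (Real.rpow_pos_of_pos hcos_pos _).le
  have hw0 : 0 ≤ jacobiw a b k := by
    rw [jacobiw]; split <;> exact Real.sqrt_nonneg _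
  rcases Nat.eq_zero_or_pos k with hk0 | hkpos
  · -- k = 0
    subst hk0
    have hz2 : Real.cos x < 1 := by
      have h := one_sub_cos_eq x
      nlinarith
    have hz1 : (0:ℝ) < Real.cos x := by
      apply Real.cos_pos_of_mem_Ioo
      constructor <;> [linarith; linarith]
    have hP1 : jacobiP a b 0 (Real.cos x) = 1 := by
      set z := Real.cos x
      have h1z : (0:ℝ) < 1 - z := by linarith
      have h2z : (0:ℝ) < 1 + z := by linarith
      rw [jacobiP, iteratedDeriv_zero]
      have e1 : (1 - z) ^ (-a) * ((1 - z) ^ (a + ((0:ℕ):ℝ))) = 1 := by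
        rw [← Real.rpow_add h1z]
        norm_num
      have e2 : (1 + z) ^ (-b) * ((1 + z) ^ (b + ((0:ℕ):ℝ))) = 1 := by
        rw [← Real.rpow_add h2z]
        norm_num
      calc ((-1:ℝ)^(0:ℕ) / ((2:ℝ)^(0:ℕ) * ((0:ℕ).factorial : ℝ))) * (1-z)^(-a) * (1+z)^(-b) *
            ((1 - z) ^ (a + ((0:ℕ):ℝ)) * (1 + z) ^ (b + ((0:ℕ):ℝ)))
          = ((1-z)^(-a) * (1 - z) ^ (a + ((0:ℕ):ℝ))) *
            ((1+z)^(-b) * (1 + z) ^ (b + ((0:ℕ):ℝ))) := by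
            norm_num
            ring
        _ = 1 := by rw [e1, e2]; norm_num
    have hs1 : Real.sin (x/2) ^ (a + 1/2 : ℝ) ≤ 1 :=
      Real.rpow_le_one hsin_pos.le hsin_le1 he0
    rw [jacobiFn, hP1, mul_one]
    rw [abs_mul, abs_mul, abs_of_nonneg hw0, abs_of_nonneg hspow, abs_of_nonneg hcpow0]
    calc jacobiw a b 0 * Real.sin (x/2) ^ (a+1/2:ℝ) * Real.cos (x/2) ^ (b+1/2:ℝ)
        ≤ jacobiw a b 0 * 1 * 1 := by
          apply mul_le_mul (mul_le_mul_of_nonneg_left hs1 hw0) hcpow1 hcpow0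
          exact mul_nonneg hw0 zero_le_one
      _ = jacobiw a b 0 := by ring
      _ ≤ max (jacobiw a b 0) (Cw * E) := le_max_left _ _
  · -- k ≥ 1
    have hk : 1 ≤ k := hkpos
    have hk1 : (1:ℝ) ≤ (k:ℝ) := by exact_mod_cast hk
    set u : ℝ := (k:ℝ) + 1 with hu
    have hu0 : (0:ℝ) < u := by linarith
    have hP := jacobiP_cos_le ha hb hk hx0 hx1
    set Q : ℝ := dPoch (a + k) k / (k.factorial : ℝ) with hQdef
    have hQ0 : 0 ≤ Q := by
      apply div_nonneg (dPoch_pos ha le_rfl).le (Nat.cast_nonneg _)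
    have hwQ := hCw k hk
    have hxu : x/2 ≤ 1/(2*u) := by
      have hxu' : x ≤ 1/u := by simpa [hu] using hx1
      have hxu2 : x * u ≤ 1 := (le_div_iff₀ hu0).mp hxu'
      rw [div_le_div_iff₀ (by norm_num) (by positivity)]
      nlinarith
    have hs_le : Real.sin (x/2) ^ (a+1/2:ℝ) ≤ (1/(2*u)) ^ (a+1/2:ℝ) := by
      apply Real.rpow_le_rpow hsin_pos.le (le_trans hsin_lex hxu) he0
    have habs : |jacobiFn a b k x| = jacobiw a b k * Real.sin (x/2) ^ (a+1/2:ℝ) *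
        Real.cos (x/2) ^ (b+1/2:ℝ) * |jacobiP a b k (Real.cos x)| := by
      rw [jacobiFn, abs_mul, abs_mul, abs_mul, abs_of_nonneg hw0, abs_of_nonneg hspow,
        abs_of_nonneg hcpow0]
    rw [habs]
    have hhalfpow : (0:ℝ) ≤ (1/(2*u)) ^ (a+1/2:ℝ) := (Real.rpow_pos_of_pos (by positivity) _).le
    calc jacobiw a b k * Real.sin (x/2) ^ (a+1/2:ℝ) * Real.cos (x/2) ^ (b+1/2:ℝ) *
          |jacobiP a b k (Real.cos x)|
        ≤ jacobiw a b k * (1/(2*u)) ^ (a+1/2:ℝ) * 1 * (Q * E) := by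
          apply mul_le_mul _ hP (abs_nonneg _) _
          · apply mul_le_mul (mul_le_mul_of_nonneg_left hs_le hw0) hcpow1 hcpow0
            exact mul_nonneg hw0 hhalfpow
          · exact mul_nonneg (mul_nonneg hw0 hhalfpow) zero_le_one
      _ = (jacobiw a b k * Q) * (1/(2*u)) ^ (a+1/2:ℝ) * E := by ring
      _ ≤ (Cw * u ^ (a+1/2:ℝ)) * (1/(2*u)) ^ (a+1/2:ℝ) * E := by
          apply mul_le_mul_of_nonneg_right _ hEpos.le
          exact mul_le_mul_of_nonneg_right hwQ hhalfpow
      _ = Cw * (u * (1/(2*u))) ^ (a+1/2:ℝ) * E := by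
          rw [Real.mul_rpow hu0.le (by positivity)]
          ring
      _ = Cw * ((1:ℝ)/2) ^ (a+1/2:ℝ) * E := by
          have huu : u * (1/(2*u)) = 1/2 := by
            field_simp
          rw [huu]
      _ ≤ Cw * 1 * E := by
          apply mul_le_mul_of_nonneg_right _ hEpos.le
          apply mul_le_mul_of_nonneg_left _ hCw0
          exact Real.rpow_le_one (by norm_num) (by norm_num) he0
      _ = Cw * E := by ring
      _ ≤ max (jacobiw a b 0) (Cw * E) := le_max_right _ _

end Aux

/-- Bound for the kernel near the left endpoint. -/
theorem jacobiK_left_endpoint_bound (α β γ δ : ℝ)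
    (hα : -(1 / 2) ≤ α) (hβ : -(1 / 2) ≤ β) (hγ : -(1 / 2) ≤ γ) (hδ : -(1 / 2) ≤ δ) :
    ∃ C : ℝ, ∀ n m : ℕ, m < n → 1 ≤ n →
      |∫ x in (0 : ℝ)..(1 / ((n : ℝ) + 1)), jacobiFn γ δ n x * jacobiFn α β m x| ≤
        C / (n : ℝ) := by
  obtain ⟨C1, hC10, hB1⟩ := jacobiFn_bounded hγ hδ
  obtain ⟨C2, hC20, hB2⟩ := jacobiFn_bounded hα hβ
  refine ⟨C1 * C2, fun n m hmn hn => ?_⟩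
  have hn1 : (1:ℝ) ≤ (n:ℝ) := by exact_mod_cast hn
  have hbd : ∀ x ∈ Set.uIoc (0:ℝ) (1/((n:ℝ)+1)),
      ‖jacobiFn γ δ n x * jacobiFn α β m x‖ ≤ C1 * C2 := by
    intro x hx
    rw [Set.uIoc_of_le (by positivity)] at hx
    obtain ⟨hx0, hx1⟩ := hx
    have h1 := hB1 n x hx0 hx1
    have hmx : x ≤ 1/((m:ℝ)+1) := by
      have hcast : (m:ℝ) + 1 ≤ (n:ℝ) + 1 := by
        have : (m:ℝ) ≤ (n:ℝ) := by exact_mod_cast hmn.le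
        linarith
      have : 1/((n:ℝ)+1) ≤ 1/((m:ℝ)+1) :=
        one_div_le_one_div_of_le (by positivity) hcast
      linarith
    have h2 := hB2 m x hx0 hmx
    rw [Real.norm_eq_abs, abs_mul]
    exact mul_le_mul h1 h2 (abs_nonneg _) hC10
  have hmain := intervalIntegral.norm_integral_le_of_norm_le_const hbd
  rw [Real.norm_eq_abs] at hmain
  have habs : |1/((n:ℝ)+1) - 0| = 1/((n:ℝ)+1) := by
    rw [sub_zero, abs_of_pos (by positivity)]
  rw [habs] at hmain
  have hstep : C1 * C2 * (1/((n:ℝ)+1)) ≤ C1 * C2 / (n:ℝ) := by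
    rw [div_eq_mul_inv (C1 * C2), ← one_div]
    apply mul_le_mul_of_nonneg_left _ (mul_nonneg hC10 hC20)
    apply one_div_le_one_div_of_le (by linarith) (by linarith)
  linarith
end
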